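/- arXiv:2604.19479 — 5 statements merged into one kernel-verified Lean document; each statement's English description precedes it below -/
import Mathlib

section
/- Let B ⊆ ℝⁿ be the convex hull of a finite set of points with nonempty interior, let w₀ ∈ ℝⁿ be nonzero, and set F := Face_B(w₀) (so F is an exposed face of B and C(B,F) := {w ≠ 0 | Face_B(w) = F} is its open inner normal cone). Then the closure of C(B,F) taken inside ℝⁿ \ {0} equals {w ∈ ℝⁿ | w ≠ 0 and F ⊆ Face_B(w)}; in other words, the closure of the open inner normal cone of F is the disjoint union of the open inner normal cones of all faces F' of B containing F. -/
/-- `Face B w` is the face of `B` on which the linear functional `⟪w, ·⟫` attains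
its minimum over `B`; `Face B w = F` says that `w` lies in the open inner normal
cone `C(B, F)`. -/
def Face {n : ℕ} (B : Set (EuclideanSpace ℝ (Fin n)))
    (w : EuclideanSpace ℝ (Fin n)) : Set (EuclideanSpace ℝ (Fin n)) :=
  {x | x ∈ B ∧ ∀ y ∈ B, (inner ℝ w x : ℝ) ≤ (inner ℝ w y : ℝ)}

/-- For a full-dimensional polytope `B` and the face
`F = Face B w₀` of a nonzero vector `w₀`, the closure of the open inner normal
cone `C(B,F) = {w ≠ 0 | Face B w = F}` taken inside `ℝⁿ \ {0}` is
`{w ≠ 0 | F ⊆ Face B w}`, i.e. the (disjoint) union of the open inner normal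
cones of all faces of `B` containing `F`. -/
theorem stmt_4 {n : ℕ}
    (S : Set (EuclideanSpace ℝ (Fin n))) (hS : S.Finite)
    (B : Set (EuclideanSpace ℝ (Fin n))) (hB : B = convexHull ℝ S)
    (hint : (interior B).Nonempty)
    (w₀ : EuclideanSpace ℝ (Fin n)) (hw₀ : w₀ ≠ 0) :
    closure {w : EuclideanSpace ℝ (Fin n) | w ≠ 0 ∧ Face B w = Face B w₀} ∩
        {w : EuclideanSpace ℝ (Fin n) | w ≠ 0}
      = {w : EuclideanSpace ℝ (Fin n) | w ≠ 0 ∧ Face B w₀ ⊆ Face B w} := by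
  have hBcompact : IsCompact B := hB ▸ hS.isCompact_convexHull (𝕜 := ℝ)
  have hBne : B.Nonempty := hint.mono interior_subset
  ext w
  simp only [Set.mem_inter_iff, Set.mem_setOf_eq]
  constructor
  · rintro ⟨hwc, hw⟩
    refine ⟨hw, fun x hx => ⟨hx.1, fun y hy => ?_⟩⟩
    have hclosed : IsClosed {v : EuclideanSpace ℝ (Fin n) | (inner ℝ v x : ℝ) ≤ (inner ℝ v y : ℝ)} :=
      isClosed_le (continuous_id.inner continuous_const) (continuous_id.inner continuous_const)
    have hsub : {w : EuclideanSpace ℝ (Fin n) | w ≠ 0 ∧ Face B w = Face B w₀} ⊆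
        {v : EuclideanSpace ℝ (Fin n) | (inner ℝ v x : ℝ) ≤ (inner ℝ v y : ℝ)} := by
      rintro v ⟨hv0, hvF⟩
      have hxv : x ∈ Face B v := hvF ▸ hx
      exact hxv.2 y hy
    exact hclosed.closure_subset_iff.mpr hsub hwc
  · rintro ⟨hw, hF⟩
    refine ⟨?_, hw⟩
    -- pick a point x₀ in the face F = Face B w₀
    obtain ⟨x₀, hx₀⟩ : (Face B w₀).Nonempty := by
      have hcont : Continuous fun x : EuclideanSpace ℝ (Fin n) => (inner ℝ w₀ x : ℝ) :=
        continuous_const.inner continuous_id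
      obtain ⟨x, hxB, hx⟩ := hBcompact.exists_isMinOn hBne hcont.continuousOn
      exact ⟨x, hxB, fun y hy => hx hy⟩
    -- key: for every t > 0, Face B (w + t•w₀) = Face B w₀
    have key : ∀ t : ℝ, 0 < t → Face B (w + t • w₀) = Face B w₀ := by
      intro t ht
      have hx₀w : x₀ ∈ Face B w := hF hx₀
      ext x
      constructor
      · rintro ⟨hxB, hxmin⟩
        refine ⟨hxB, fun y hy => ?_⟩
        have h1 := hxmin x₀ hx₀.1
        have h2 := hx₀w.2 x hxB
        simp only [inner_add_left, real_inner_smul_left] at h1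
        have h3 : (inner ℝ w₀ x : ℝ) ≤ (inner ℝ w₀ x₀ : ℝ) := by nlinarith
        exact h3.trans (hx₀.2 y hy)
      · rintro ⟨hxB, hxmin⟩
        refine ⟨hxB, fun y hy => ?_⟩
        have hw1 := (hF ⟨hxB, hxmin⟩).2 y hy
        have hw2 := hxmin y hy
        simp only [inner_add_left, real_inner_smul_left]
        nlinarith
    -- take the limit t → 0⁺
    have htend : Filter.Tendsto (fun t : ℝ => w + t • w₀) (nhdsWithin 0 (Set.Ioi 0)) (nhds w) := by
      have h0 : Filter.Tendsto (fun t : ℝ => w + t • w₀) (nhds 0) (nhds (w + (0 : ℝ) • w₀)) :=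
        Filter.Tendsto.add tendsto_const_nhds
          ((continuous_id.smul continuous_const).tendsto 0)
      simpa using h0.mono_left nhdsWithin_le_nhds
    have hne : ∀ᶠ t in nhdsWithin (0 : ℝ) (Set.Ioi 0), w + t • w₀ ≠ 0 := by
      have hmem : {v : EuclideanSpace ℝ (Fin n) | v ≠ 0} ∈ nhds w :=
        isOpen_ne.mem_nhds hw
      exact htend.eventually hmem
    have hev : ∀ᶠ t in nhdsWithin (0 : ℝ) (Set.Ioi 0),
        (w + t • w₀) ∈ {w : EuclideanSpace ℝ (Fin n) | w ≠ 0 ∧ Face B w = Face B w₀} := by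
      filter_upwards [hne, self_mem_nhdsWithin] with t h1 h2
      exact ⟨h1, key t h2⟩
    exact mem_closure_of_tendsto htend hev
end

section
/- Let B ⊆ ℝⁿ be the convex hull of a finite set of points with nonempty interior (a full-dimensional polytope), where n ≥ 1. For a nonzero w ∈ ℝⁿ let dim Face_B(w) denote the dimension of the affine span of Face_B(w) (the rank of the direction submodule of affineSpan ℝ (Face_B(w))), and for 0 ≤ j ≤ n-1 put W_j := {w ∈ ℝⁿ | w ≠ 0 and dim Face_B(w) = n-1-j}. Then for every j with 0 ≤ j ≤ n-1, the closure of W_j taken inside ℝⁿ \ {0} equals {w ∈ ℝⁿ | w ≠ 0 and dim Face_B(w) ≥ n-1-j} = W_0 ∪ W_1 ∪ ⋯ ∪ W_j. (This is the key closure/frontier property in the stratification of ℝP^{n-1} induced by the inner normal fan of B.) -/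
section AuxPolytope

open Module RealInnerProductSpace

set_option linter.unusedSectionVars false
variable {E : Type*} [NormedAddCommGroup E] [InnerProductSpace ℝ E] [FiniteDimensional ℝ E]

/-- general face -/
def gface (B : Set E) (w : E) : Set E := {x | x ∈ B ∧ ∀ y ∈ B, (inner ℝ w x : ℝ) ≤ (inner ℝ w y : ℝ)}

/-- argmin of ⟪w,·⟫ over T -/
noncomputable def amin (T : Finset E) (w : E) : Finset E :=
  T.filter (fun t => ∀ s ∈ T, (inner ℝ w t : ℝ) ≤ (inner ℝ w s : ℝ))

lemma amin_subset (T : Finset E) (w : E) : amin T w ⊆ T := Finset.filter_subset _ _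

lemma amin_nonempty {T : Finset E} (hT : T.Nonempty) (w : E) : (amin T w).Nonempty := by
  obtain ⟨t, ht, hmin⟩ := T.exists_min_image (fun t => (inner ℝ w t : ℝ)) hT
  exact ⟨t, Finset.mem_filter.2 ⟨ht, hmin⟩⟩

lemma mem_amin {T : Finset E} {w t : E} :
    t ∈ amin T w ↔ t ∈ T ∧ ∀ s ∈ T, (inner ℝ w t : ℝ) ≤ (inner ℝ w s : ℝ) := Finset.mem_filter

lemma amin_inner_eq {T : Finset E} {w a b : E} (ha : a ∈ amin T w) (hb : b ∈ amin T w) :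
    (inner ℝ w a : ℝ) = inner ℝ w b :=
  le_antisymm ((mem_amin.1 ha).2 b (amin_subset T w hb)) ((mem_amin.1 hb).2 a (amin_subset T w ha))

lemma amin_lt {T : Finset E} {w t t0 : E} (ht0 : t0 ∈ amin T w) (ht : t ∈ T)
    (hn : t ∉ amin T w) : (inner ℝ w t0 : ℝ) < inner ℝ w t := by
  rcases lt_or_eq_of_le ((mem_amin.1 ht0).2 t ht) with h | h
  · exact h
  · exact absurd (mem_amin.2 ⟨ht, fun s hs => h ▸ (mem_amin.1 ht0).2 s hs⟩) hn

lemma inner_le_on_hull {A : Set E} {w : E} {c : ℝ} (h : ∀ a ∈ A, c ≤ (inner ℝ w a : ℝ))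
    {x : E} (hx : x ∈ convexHull ℝ A) : c ≤ (inner ℝ w x : ℝ) := by
  have : convexHull ℝ A ⊆ {x | c ≤ (inner ℝ w x : ℝ)} :=
    convexHull_min h (convex_halfSpace_ge ⟨fun a b => inner_add_right w a b,
      fun r a => real_inner_smul_right w a r⟩ c)
  exact this hx

lemma inner_ge_on_hull {A : Set E} {w : E} {c : ℝ} (h : ∀ a ∈ A, (inner ℝ w a : ℝ) ≤ c)
    {x : E} (hx : x ∈ convexHull ℝ A) : (inner ℝ w x : ℝ) ≤ c := by
  have : convexHull ℝ A ⊆ {x | (inner ℝ w x : ℝ) ≤ c} :=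
    convexHull_min h (convex_halfSpace_le ⟨fun a b => inner_add_right w a b,
      fun r a => real_inner_smul_right w a r⟩ c)
  exact this hx

/-- Key description of the face of a polytope. -/
lemma gface_hull (T : Finset E) (hT : T.Nonempty) (w : E) :
    gface (convexHull ℝ (T : Set E)) w = convexHull ℝ ((amin T w : Finset E) : Set E) := by
  obtain ⟨t0, ht0⟩ := amin_nonempty hT w
  set m : ℝ := inner ℝ w t0 with hm
  apply Set.Subset.antisymm
  · rintro x ⟨hxB, hxmin⟩
    -- inner w x = m
    have h1 : (inner ℝ w x : ℝ) ≤ m := hxmin t0 (subset_convexHull ℝ _ (amin_subset T w ht0))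
    have h2 : m ≤ (inner ℝ w x : ℝ) :=
      inner_le_on_hull (fun a ha => (mem_amin.1 ht0).2 a ha) hxB
    have hxm : (inner ℝ w x : ℝ) = m := le_antisymm h1 h2
    -- convex combination
    rw [Finset.convexHull_eq] at hxB
    obtain ⟨a, ha0, ha1, hax⟩ := hxB
    rw [T.centerMass_eq_of_sum_1 _ ha1] at hax
    simp only [id] at hax
    have hsum : ∑ t ∈ T, a t * ((inner ℝ w t : ℝ) - m) = 0 := by
      have : (inner ℝ w x : ℝ) = ∑ t ∈ T, a t * (inner ℝ w t : ℝ) := by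
        rw [← hax, inner_sum]
        exact Finset.sum_congr rfl fun t _ => real_inner_smul_right w t (a t)
      have hms : ∑ t ∈ T, a t * m = m := by
        rw [← Finset.sum_mul, ha1, one_mul]
      calc ∑ t ∈ T, a t * ((inner ℝ w t : ℝ) - m)
          = (∑ t ∈ T, a t * (inner ℝ w t : ℝ)) - ∑ t ∈ T, a t * m := by
            rw [← Finset.sum_sub_distrib]; exact Finset.sum_congr rfl fun t _ => by ring
        _ = 0 := by rw [← this, hms, hxm, sub_self]
    have hzero : ∀ t ∈ T, a t * ((inner ℝ w t : ℝ) - m) = 0 :=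
      (Finset.sum_eq_zero_iff_of_nonneg (fun t ht =>
        mul_nonneg (ha0 t ht) (sub_nonneg.2 ((mem_amin.1 ht0).2 t ht)))).1 hsum
    have hsupp : ∀ t ∈ T, t ∉ amin T w → a t = 0 := by
      intro t ht htn
      have := hzero t ht
      have hne : (inner ℝ w t : ℝ) - m ≠ 0 := sub_ne_zero.2 (amin_lt ht0 ht htn).ne'
      exact (mul_eq_zero.1 this).resolve_right hne
    have hsum' : ∑ t ∈ amin T w, a t = 1 := by
      rw [← ha1]
      exact Finset.sum_subset (amin_subset T w) (fun t ht htn => hsupp t ht htn)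
    have hx' : (amin T w).centerMass a id = x := by
      rw [(amin T w).centerMass_eq_of_sum_1 _ hsum']
      rw [← hax]
      simp only [id]
      exact Finset.sum_subset (amin_subset T w) (fun t ht htn => by
        rw [hsupp t ht htn, zero_smul])
    rw [Finset.convexHull_eq]
    exact ⟨a, fun t ht => ha0 t (amin_subset T w ht), hsum', hx'⟩
  · intro x hx
    refine ⟨convexHull_mono (by exact_mod_cast amin_subset T w) hx, ?_⟩
    intro y hy
    have hxm : (inner ℝ w x : ℝ) ≤ m :=
      inner_ge_on_hull (fun a ha => le_of_eq (amin_inner_eq ha ht0)) hx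
    have hym : m ≤ (inner ℝ w y : ℝ) :=
      inner_le_on_hull (fun t ht => (mem_amin.1 ht0).2 t ht) hy
    linarith

/-- dimension of the polytope spanned by a finite set -/
noncomputable def dimA (A : Finset E) : ℕ := finrank ℝ (vectorSpan ℝ (A : Set E))

lemma vectorSpan_le_orth {A : Set E} {v : E} {c : ℝ} (hc : ∀ a ∈ A, (inner ℝ v a : ℝ) = c) :
    vectorSpan ℝ A ≤ (ℝ ∙ v)ᗮ := by
  rcases A.eq_empty_or_nonempty with h | ⟨p, hp⟩
  · rw [h, vectorSpan_empty]; exact bot_le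
  · rw [vectorSpan_eq_span_vsub_set_right ℝ hp, Submodule.span_le]
    rintro x ⟨a, ha, rfl⟩
    rw [SetLike.mem_coe, Submodule.mem_orthogonal_singleton_iff_inner_left]
    have h1 : (inner ℝ ((fun x => x -ᵥ p) a) v : ℝ) = inner ℝ a v - inner ℝ p v := by
      simp [vsub_eq_sub, inner_sub_left]
    have h2 : (inner ℝ a v : ℝ) = c := by rw [real_inner_comm]; exact hc a ha
    have h3 : (inner ℝ p v : ℝ) = c := by rw [real_inner_comm]; exact hc p hp
    rw [h1, h2, h3, sub_self]

lemma finrank_orth_singleton {v : E} (hv : v ≠ 0) :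
    finrank ℝ ((ℝ ∙ v)ᗮ : Submodule ℝ E) = finrank ℝ E - 1 := by
  have h := Submodule.finrank_add_finrank_orthogonal (ℝ ∙ v)
  rw [finrank_span_singleton hv] at h
  omega

lemma vectorSpan_amin_le_orth (T : Finset E) (w : E) :
    vectorSpan ℝ ((amin T w : Finset E) : Set E) ≤ (ℝ ∙ w)ᗮ := by
  rcases (amin T w).eq_empty_or_nonempty with h | ⟨t0, ht0⟩
  · rw [h]; simp [vectorSpan_empty]
  · exact vectorSpan_le_orth (fun a ha => amin_inner_eq ha ht0)

lemma dimA_amin_le {T : Finset E} (w : E) (hw : w ≠ 0) :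
    dimA (amin T w) ≤ finrank ℝ E - 1 := by
  rw [dimA, ← finrank_orth_singleton hw]
  exact Submodule.finrank_mono (vectorSpan_amin_le_orth T w)

lemma vectorSpan_mono' {A B : Set E} (h : A ⊆ B) : vectorSpan ℝ A ≤ vectorSpan ℝ B :=
  vectorSpan_mono ℝ h

/-- perturbing within the span strictly decreases dimension -/
lemma dimA_amin_lt {T : Finset E} {u : E} (hu : u ≠ 0)
    (huV : u ∈ vectorSpan ℝ (T : Set E)) :
    dimA (amin T u) < finrank ℝ (vectorSpan ℝ (T : Set E)) := by
  set V := vectorSpan ℝ (T : Set E)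
  have hle : vectorSpan ℝ ((amin T u : Finset E) : Set E) ≤ V ⊓ (ℝ ∙ u)ᗮ :=
    le_inf (vectorSpan_mono' (by exact_mod_cast amin_subset T u)) (vectorSpan_amin_le_orth T u)
  have hlt : V ⊓ (ℝ ∙ u)ᗮ < V := by
    refine lt_of_le_of_ne inf_le_left (fun hEq => ?_)
    have : u ∈ V ⊓ (ℝ ∙ u)ᗮ := hEq.symm ▸ huV
    have h0 : (inner ℝ u u : ℝ) = 0 :=
      Submodule.mem_orthogonal_singleton_iff_inner_left.1 this.2
    exact hu (inner_self_eq_zero.1 h0)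
  exact lt_of_le_of_lt (Submodule.finrank_mono hle) (Submodule.finrank_lt_finrank_of_lt hlt)

lemma finrank_vectorSpan_insert {A : Set E} (hA : A.Nonempty) {p : E}
    (hp : p ∉ affineSpan ℝ A) :
    finrank ℝ (vectorSpan ℝ (insert p A)) = finrank ℝ (vectorSpan ℝ A) + 1 := by
  obtain ⟨q, hq⟩ := hA
  have hq' : q ∈ affineSpan ℝ A := mem_affineSpan ℝ hq
  have hd : vectorSpan ℝ (insert p A) =
      Submodule.span ℝ {p -ᵥ q} ⊔ (affineSpan ℝ A).direction := by
    rw [← direction_affineSpan, ← affineSpan_insert_affineSpan ℝ p A,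
      AffineSubspace.direction_affineSpan_insert hq']
  have hnot : p -ᵥ q ∉ (affineSpan ℝ A).direction := by
    intro h
    exact hp (by simpa [vsub_vadd] using AffineSubspace.vadd_mem_of_mem_direction h hq')
  have hne : p -ᵥ q ≠ 0 := by
    intro h
    exact hp (by rw [vsub_eq_zero_iff_eq.1 h]; exact hq')
  have hinf : Submodule.span ℝ {p -ᵥ q} ⊓ (affineSpan ℝ A).direction = ⊥ := by
    rw [Submodule.eq_bot_iff]
    rintro x ⟨hx1, hx2⟩
    obtain ⟨c, rfl⟩ := Submodule.mem_span_singleton.1 hx1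
    rcases eq_or_ne c 0 with rfl | hc
    · simp
    · have h2 : c⁻¹ • c • (p -ᵥ q) ∈ (affineSpan ℝ A).direction :=
        Submodule.smul_mem _ c⁻¹ hx2
      rw [smul_smul, inv_mul_cancel₀ hc, one_smul] at h2
      exact absurd h2 hnot
  have := Submodule.finrank_sup_add_finrank_inf_eq
    (Submodule.span ℝ {p -ᵥ q}) (affineSpan ℝ A).direction
  rw [hinf, finrank_bot, finrank_span_singleton hne, add_zero] at this
  rw [hd, this, direction_affineSpan, add_comm]

lemma rotate {T : Finset E} {u v t0 : E} (ht0 : t0 ∈ amin T u)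
    (hvA : ∀ a ∈ amin T u, (inner ℝ v a : ℝ) = inner ℝ v t0)
    (hex : ∃ t ∈ T, (inner ℝ v t : ℝ) < inner ℝ v t0) :
    ∃ lam : ℝ, 0 < lam ∧ ∃ tstar ∈ T, (inner ℝ v tstar : ℝ) < inner ℝ v t0 ∧
      ∀ s : E, (s = tstar ∨ s ∈ amin T u) → s ∈ amin T (u + lam • v) := by
  set c : ℝ := inner ℝ v t0 with hc
  set m : ℝ := inner ℝ u t0 with hm
  set Tneg : Finset E := T.filter (fun t => (inner ℝ v t : ℝ) < c) with hTneg
  have hne : Tneg.Nonempty := by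
    obtain ⟨t, ht, hlt⟩ := hex
    exact ⟨t, Finset.mem_filter.2 ⟨ht, hlt⟩⟩
  have hTneg_mem : ∀ t ∈ Tneg, t ∈ T ∧ (inner ℝ v t : ℝ) < c := fun t ht =>
    ⟨(Finset.mem_filter.1 ht).1, (Finset.mem_filter.1 ht).2⟩
  have hstrict : ∀ t ∈ Tneg, m < (inner ℝ u t : ℝ) := by
    intro t ht
    obtain ⟨htT, hlt⟩ := hTneg_mem t ht
    refine amin_lt ht0 htT (fun hmem => ?_)
    exact absurd (hvA t hmem) (ne_of_lt hlt)
  set lamf : E → ℝ := fun t => ((inner ℝ u t : ℝ) - m) / (c - inner ℝ v t) with hlamf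
  have hlamf_pos : ∀ t ∈ Tneg, 0 < lamf t := by
    intro t ht
    exact div_pos (sub_pos.2 (hstrict t ht)) (sub_pos.2 (hTneg_mem t ht).2)
  obtain ⟨tstar, htstar, hts_eq⟩ := Tneg.exists_mem_eq_inf' hne lamf
  set lam : ℝ := Tneg.inf' hne lamf with hlam
  have hlam_pos : 0 < lam := hts_eq ▸ hlamf_pos tstar htstar
  have hlam_le : ∀ t ∈ Tneg, lam ≤ lamf t := fun t ht => Finset.inf'_le lamf ht
  -- key inequality
  have hval : ∀ s : E, (inner ℝ (u + lam • v) s : ℝ) = inner ℝ u s + lam * inner ℝ v s := by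
    intro s
    rw [inner_add_left, real_inner_smul_left]
  have key : ∀ s ∈ T, m + lam * c ≤ (inner ℝ (u + lam • v) s : ℝ) := by
    intro s hs
    rw [hval]
    rcases lt_or_ge ((inner ℝ v s : ℝ)) c with hlt | hge
    · have hsneg : s ∈ Tneg := Finset.mem_filter.2 ⟨hs, hlt⟩
      have h1 : lam ≤ ((inner ℝ u s : ℝ) - m) / (c - inner ℝ v s) := hlam_le s hsneg
      have h2 : lam * (c - inner ℝ v s) ≤ (inner ℝ u s : ℝ) - m :=
        (le_div_iff₀ (sub_pos.2 hlt)).1 h1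
      nlinarith
    · have h1 : m ≤ (inner ℝ u s : ℝ) := (mem_amin.1 ht0).2 s hs
      nlinarith
  have heqA : ∀ a ∈ amin T u, (inner ℝ (u + lam • v) a : ℝ) = m + lam * c := by
    intro a ha
    rw [hval, amin_inner_eq ha ht0, hvA a ha]
  have heqstar : (inner ℝ (u + lam • v) tstar : ℝ) = m + lam * c := by
    rw [hval]
    have hden : c - (inner ℝ v tstar : ℝ) ≠ 0 := sub_ne_zero.2 (ne_of_gt (hTneg_mem tstar htstar).2)
    have h5 : lam * (c - inner ℝ v tstar) = (inner ℝ u tstar : ℝ) - m := by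
      have h6 : lam = ((inner ℝ u tstar : ℝ) - m) / (c - inner ℝ v tstar) := hts_eq
      rw [h6, div_mul_cancel₀ _ hden]
    nlinarith [h5]
  refine ⟨lam, hlam_pos, tstar, (hTneg_mem tstar htstar).1, (hTneg_mem tstar htstar).2, ?_⟩
  intro s hs
  rcases hs with rfl | hsA
  · exact mem_amin.2 ⟨(hTneg_mem s htstar).1, fun r hr => heqstar ▸ key r hr⟩
  · exact mem_amin.2 ⟨amin_subset T u hsA, fun r hr => (heqA s hsA) ▸ key r hr⟩

lemma facet (T : Finset E) (hT : T.Nonempty)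
    (hd : 1 ≤ finrank ℝ (vectorSpan ℝ (T : Set E))) :
    ∃ u : E, u ≠ 0 ∧ dimA (amin T u) = finrank ℝ (vectorSpan ℝ (T : Set E)) - 1 := by
  classical
  set V := vectorSpan ℝ (T : Set E) with hV
  set d := finrank ℝ V with hdd
  set D : Set ℕ := {e | ∃ u : E, u ∈ V ∧ u ≠ 0 ∧ dimA (amin T u) = e} with hD
  have hDne : D.Nonempty := by
    have hbot : V ≠ ⊥ := by
      intro hb
      rw [hdd, hb, finrank_bot] at hd
      omega
    obtain ⟨u0, hu0V, hu00⟩ := Submodule.exists_mem_ne_zero_of_ne_bot hbot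
    exact ⟨dimA (amin T u0), u0, hu0V, hu00, rfl⟩
  have hDbdd : BddAbove D := by
    refine ⟨d, fun e he => ?_⟩
    obtain ⟨u, huV, hu0, hue⟩ := he
    exact le_of_lt (hue ▸ dimA_amin_lt hu0 huV)
  obtain ⟨u, huV, hu0, hue⟩ := Nat.sSup_mem hDne hDbdd
  set e := sSup D with he
  have hmax : ∀ u' : E, u' ∈ V → u' ≠ 0 → dimA (amin T u') ≤ e := by
    intro u' h1 h2
    exact le_csSup hDbdd ⟨u', h1, h2, rfl⟩
  have helt : e < d := hue ▸ dimA_amin_lt hu0 huV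
  -- it suffices to show e = d - 1
  refine ⟨u, hu0, ?_⟩
  rw [hue]
  by_contra hne
  have he1 : e + 1 < d := by omega
  obtain ⟨t0, ht0⟩ := amin_nonempty hT u
  set A := amin T u with hA
  set W : Submodule ℝ E := vectorSpan ℝ ((A : Finset E) : Set E) ⊔ (ℝ ∙ u) with hW
  have hWrank : finrank ℝ W ≤ e + 1 := by
    have h1 := Submodule.finrank_sup_add_finrank_inf_eq
      (vectorSpan ℝ ((A : Finset E) : Set E)) (ℝ ∙ u)
    have h2 : finrank ℝ (ℝ ∙ u) = 1 := finrank_span_singleton hu0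
    have h3 : finrank ℝ (vectorSpan ℝ ((A : Finset E) : Set E)) ≤ e := hmax u huV hu0
    rw [h2] at h1
    rw [hW]
    omega
  -- find v in V ∩ Wᗮ, nonzero
  have hVWrank : 0 < finrank ℝ (V ⊓ Wᗮ : Submodule ℝ E) := by
    have h1 := Submodule.finrank_sup_add_finrank_inf_eq V Wᗮ
    have h2 : finrank ℝ (Wᗮ : Submodule ℝ E) = finrank ℝ E - finrank ℝ W := by
      have := Submodule.finrank_add_finrank_orthogonal W
      omega
    have h3 : finrank ℝ (V ⊔ Wᗮ : Submodule ℝ E) ≤ finrank ℝ E := Submodule.finrank_le _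
    have h4 : finrank ℝ W ≤ finrank ℝ E := Submodule.finrank_le _
    have h5 : d ≤ finrank ℝ E := Submodule.finrank_le _
    omega
  have hVWbot : (V ⊓ Wᗮ : Submodule ℝ E) ≠ ⊥ := by
    intro hb
    rw [hb, finrank_bot] at hVWrank
    omega
  obtain ⟨v, hvVW, hv0⟩ := Submodule.exists_mem_ne_zero_of_ne_bot hVWbot
  have hvV : v ∈ V := hvVW.1
  have hvW : v ∈ Wᗮ := hvVW.2
  have hvsA : vectorSpan ℝ ((A : Finset E) : Set E) ≤ W := le_sup_left
  have huW : u ∈ W := Submodule.mem_sup_right (Submodule.mem_span_singleton_self u)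
  -- main step: a witness direction with a smaller inner value leads to contradiction
  have main : ∀ v' : E, v' ∈ V → v' ∈ Wᗮ →
      (∃ t ∈ T, (inner ℝ v' t : ℝ) < inner ℝ v' t0) → False := by
    intro v' hv'V hv'W hex
    have hv'A : ∀ a ∈ amin T u, (inner ℝ v' a : ℝ) = inner ℝ v' t0 := by
      intro a ha
      have hmem : a -ᵥ t0 ∈ W := hvsA (vsub_mem_vectorSpan ℝ (by exact_mod_cast ha)
        (by exact_mod_cast ht0))
      have h0 : (inner ℝ (a -ᵥ t0) v' : ℝ) = 0 :=
        (Submodule.mem_orthogonal W v').1 hv'W _ hmem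
      have : (inner ℝ (a - t0) v' : ℝ) = inner ℝ a v' - inner ℝ t0 v' := inner_sub_left a t0 v'
      rw [vsub_eq_sub, this] at h0
      have c1 : (inner ℝ v' a : ℝ) = inner ℝ a v' := (real_inner_comm v' a).symm
      have c2 : (inner ℝ v' t0 : ℝ) = inner ℝ t0 v' := (real_inner_comm v' t0).symm
      rw [c1, c2]
      linarith
    obtain ⟨lam, hlam, tstar, htsT, htslt, hsub⟩ := rotate ht0 hv'A hex
    set u' : E := u + lam • v' with hu'
    have hu'V : u' ∈ V := V.add_mem huV (V.smul_mem lam hv'V)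
    have hu'0 : u' ≠ 0 := by
      intro h0
      have h1 : (inner ℝ u' u : ℝ) = 0 := by rw [h0, inner_zero_left]
      have h2 : (inner ℝ u v' : ℝ) = 0 := (Submodule.mem_orthogonal W v').1 hv'W u huW
      have h3 : (inner ℝ u' u : ℝ) = inner ℝ u u + lam * inner ℝ v' u := by
        rw [hu', inner_add_left, real_inner_smul_left]
      have c1 : (inner ℝ v' u : ℝ) = inner ℝ u v' := (real_inner_comm v' u).symm
      have h4 : (inner ℝ u u : ℝ) = 0 := by
        rw [h1] at h3
        rw [c1, h2] at h3
        linarith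
      exact hu0 (inner_self_eq_zero.1 h4)
    -- tstar is outside the affine span of A
    have hts_not : tstar ∉ affineSpan ℝ ((A : Finset E) : Set E) := by
      intro hmem
      have h1 : tstar -ᵥ t0 ∈ vectorSpan ℝ ((A : Finset E) : Set E) := by
        rw [← direction_affineSpan]
        exact AffineSubspace.vsub_mem_direction hmem (mem_affineSpan ℝ (by exact_mod_cast ht0))
      have h2 : (inner ℝ (tstar -ᵥ t0) v' : ℝ) = 0 :=
        (Submodule.mem_orthogonal W v').1 hv'W _ (hvsA h1)
      have h3 : (inner ℝ (tstar - t0) v' : ℝ) = inner ℝ tstar v' - inner ℝ t0 v' :=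
        inner_sub_left tstar t0 v'
      rw [vsub_eq_sub, h3] at h2
      have c1 : (inner ℝ v' tstar : ℝ) = inner ℝ tstar v' := (real_inner_comm v' tstar).symm
      have c2 : (inner ℝ v' t0 : ℝ) = inner ℝ t0 v' := (real_inner_comm v' t0).symm
      rw [c1, c2] at htslt
      linarith
    have hAne : ((A : Finset E) : Set E).Nonempty := ⟨t0, by exact_mod_cast ht0⟩
    have hins : finrank ℝ (vectorSpan ℝ (insert tstar ((A : Finset E) : Set E))) = e + 1 := by
      rw [finrank_vectorSpan_insert hAne hts_not]
      have : dimA A = e := hue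
      rw [dimA] at this
      rw [this]
    have hsubset : insert tstar ((A : Finset E) : Set E) ⊆ ((amin T u' : Finset E) : Set E) := by
      intro s hs
      rcases hs with rfl | hsA
      · exact_mod_cast hsub s (Or.inl rfl)
      · exact_mod_cast hsub s (Or.inr (by exact_mod_cast hsA))
    have hge : e + 1 ≤ dimA (amin T u') := by
      rw [← hins, dimA]
      exact Submodule.finrank_mono (vectorSpan_mono' hsubset)
    have hle := hmax u' hu'V hu'0
    omega
  -- case analysis on v
  set c : ℝ := inner ℝ v t0 with hc
  by_cases hall : ∀ t ∈ T, (inner ℝ v t : ℝ) = c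
  · have hVorth : V ≤ (ℝ ∙ v)ᗮ := vectorSpan_le_orth hall
    have : (inner ℝ v v : ℝ) = 0 :=
      Submodule.mem_orthogonal_singleton_iff_inner_left.1 (hVorth hvV)
    exact hv0 (inner_self_eq_zero.1 this)
  · push_neg at hall
    obtain ⟨t, htT, htne⟩ := hall
    rcases lt_or_gt_of_ne htne with hlt | hgt
    · exact main v hvV hvW ⟨t, htT, hlt⟩
    · refine main (-v) (V.neg_mem hvV) (Wᗮ.neg_mem hvW) ⟨t, htT, ?_⟩
      rw [inner_neg_left, inner_neg_left]
      exact neg_lt_neg hgt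

lemma perturb (T : Finset E) (hT : T.Nonempty) (w u : E) :
    ∃ ε : ℝ, 0 < ε ∧ ∀ δ : ℝ, 0 < δ → δ ≤ ε →
      amin T (w + δ • u) = amin (amin T w) u := by
  classical
  obtain ⟨t1, ht1⟩ := amin_nonempty (amin_nonempty hT w) u
  have ht1A : t1 ∈ amin T w := amin_subset _ _ ht1
  set m : ℝ := inner ℝ w t1 with hm
  set mu : ℝ := inner ℝ u t1 with hmu
  set R : Finset E := T.filter (fun t => t ∉ amin T w) with hR
  set g : E → ℝ := fun t => ((inner ℝ w t : ℝ) - m) / (|(inner ℝ u t : ℝ) - mu| + 1) with hg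
  have hgpos : ∀ t ∈ R, 0 < g t := by
    intro t ht
    obtain ⟨htT, htn⟩ := Finset.mem_filter.1 ht
    have h1 : m < (inner ℝ w t : ℝ) := amin_lt ht1A htT htn
    have h2 : (0:ℝ) < |(inner ℝ u t : ℝ) - mu| + 1 := by positivity
    exact div_pos (sub_pos.2 h1) h2
  set ε : ℝ := if h : R.Nonempty then R.inf' h g else 1 with hε
  have hεpos : 0 < ε := by
    rw [hε]
    split_ifs with h
    · obtain ⟨t, ht, hteq⟩ := R.exists_mem_eq_inf' h g
      rw [hteq]; exact hgpos t ht
    · norm_num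
  refine ⟨ε, hεpos, fun δ hδ hδε => ?_⟩
  have hval : ∀ s : E, (inner ℝ (w + δ • u) s : ℝ) = inner ℝ w s + δ * inner ℝ u s := by
    intro s; rw [inner_add_left, real_inner_smul_left]
  have hEq : ∀ s ∈ amin (amin T w) u, (inner ℝ (w + δ • u) s : ℝ) = m + δ * mu := by
    intro s hs
    rw [hval, amin_inner_eq (amin_subset _ _ hs) ht1A, amin_inner_eq hs ht1]
  have hGt : ∀ s ∈ T, s ∉ amin (amin T w) u →
      m + δ * mu < (inner ℝ (w + δ • u) s : ℝ) := by
    intro s hsT hsn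
    rw [hval]
    by_cases hsA : s ∈ amin T w
    · have h1 : (inner ℝ w s : ℝ) = m := amin_inner_eq hsA ht1A
      have h2 : mu < (inner ℝ u s : ℝ) := amin_lt ht1 hsA hsn
      nlinarith
    · have hsR : s ∈ R := Finset.mem_filter.2 ⟨hsT, hsA⟩
      have hRne : R.Nonempty := ⟨s, hsR⟩
      have hεle : ε ≤ g s := by
        rw [hε, dif_pos hRne]; exact Finset.inf'_le g hsR
      have habs : (0:ℝ) < |(inner ℝ u s : ℝ) - mu| + 1 := by positivity
      have h1 : δ * (|(inner ℝ u s : ℝ) - mu| + 1) ≤ (inner ℝ w s : ℝ) - m := by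
        have := le_trans hδε hεle
        rw [hg] at this
        calc δ * (|(inner ℝ u s : ℝ) - mu| + 1)
            ≤ ((inner ℝ w s : ℝ) - m) / (|(inner ℝ u s : ℝ) - mu| + 1) *
              (|(inner ℝ u s : ℝ) - mu| + 1) := by
              exact mul_le_mul_of_nonneg_right this (le_of_lt habs)
          _ = (inner ℝ w s : ℝ) - m := div_mul_cancel₀ _ (ne_of_gt habs)
      have h2 : mu - (inner ℝ u s : ℝ) ≤ |(inner ℝ u s : ℝ) - mu| := by
        rw [abs_sub_comm]; exact le_abs_self _
      nlinarith [abs_nonneg ((inner ℝ u s : ℝ) - mu), hδ.le]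
  apply Finset.ext
  intro s
  constructor
  · intro hs
    by_contra hsn
    have h1 : (inner ℝ (w + δ • u) s : ℝ) ≤ m + δ * mu := by
      rw [← hEq t1 ht1]
      exact (mem_amin.1 hs).2 t1 (amin_subset _ _ ht1A)
    exact absurd h1 (not_le.2 (hGt s (mem_amin.1 hs).1 hsn))
  · intro hs
    refine mem_amin.2 ⟨amin_subset _ _ (amin_subset _ _ hs), fun r hr => ?_⟩
    rw [hEq s hs]
    by_cases hrn : r ∈ amin (amin T w) u
    · rw [hEq r hrn]
    · exact le_of_lt (hGt r hr hrn)

lemma approx (T : Finset E) (hT : T.Nonempty) (e : ℕ) :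
    ∀ (m : ℕ) (w : E), w ≠ 0 → dimA (amin T w) = e + m →
      ∀ η : ℝ, 0 < η → ∃ w' : E, w' ≠ 0 ∧ dist w' w < η ∧ dimA (amin T w') = e := by
  intro m
  induction m with
  | zero =>
    intro w hw hd η hη
    exact ⟨w, hw, by simpa [dist_self] using hη, by simpa using hd⟩
  | succ k ih =>
    intro w hw hd η hη
    have hT' : (amin T w).Nonempty := amin_nonempty hT w
    have hd1 : 1 ≤ finrank ℝ (vectorSpan ℝ ((amin T w : Finset E) : Set E)) := by
      have : dimA (amin T w) = e + (k + 1) := hd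
      rw [dimA] at this
      omega
    obtain ⟨u, hu0, hufacet⟩ := facet (amin T w) hT' hd1
    obtain ⟨ε, hε, hεp⟩ := perturb T hT w u
    have hu1 : (0:ℝ) < ‖u‖ + 1 := by positivity
    have hw0 : (0:ℝ) < ‖w‖ := norm_pos_iff.2 hw
    set δ : ℝ := min ε (min (η / (2 * (‖u‖ + 1))) (‖w‖ / (‖u‖ + 1))) with hδdef
    have hδpos : 0 < δ := by
      apply lt_min hε
      apply lt_min
      · positivity
      · positivity
    have hδε : δ ≤ ε := min_le_left _ _
    have hδη : δ * (‖u‖ + 1) ≤ η / 2 := by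
      have h1 : δ ≤ η / (2 * (‖u‖ + 1)) := le_trans (min_le_right _ _) (min_le_left _ _)
      calc δ * (‖u‖ + 1) ≤ η / (2 * (‖u‖ + 1)) * (‖u‖ + 1) :=
            mul_le_mul_of_nonneg_right h1 hu1.le
        _ = η / 2 := by field_simp
    have hδw : δ * (‖u‖ + 1) ≤ ‖w‖ := by
      have h1 : δ ≤ ‖w‖ / (‖u‖ + 1) := le_trans (min_le_right _ _) (min_le_right _ _)
      calc δ * (‖u‖ + 1) ≤ ‖w‖ / (‖u‖ + 1) * (‖u‖ + 1) :=
            mul_le_mul_of_nonneg_right h1 hu1.le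
        _ = ‖w‖ := div_mul_cancel₀ _ (ne_of_gt hu1)
    have hnorm : ‖δ • u‖ < δ * (‖u‖ + 1) := by
      rw [norm_smul, Real.norm_eq_abs, abs_of_pos hδpos]
      nlinarith
    set w1 : E := w + δ • u with hw1def
    have hdist1 : dist w1 w < η / 2 := by
      rw [hw1def, dist_eq_norm, add_sub_cancel_left]
      exact lt_of_lt_of_le hnorm hδη
    have hw1ne : w1 ≠ 0 := by
      intro h0
      have : w = -(δ • u) := by
        rw [hw1def] at h0
        linear_combination (norm := abel) h0
      have h2 : ‖w‖ < ‖w‖ := by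
        calc ‖w‖ = ‖δ • u‖ := by rw [this, norm_neg]
          _ < δ * (‖u‖ + 1) := hnorm
          _ ≤ ‖w‖ := hδw
      exact absurd h2 (lt_irrefl _)
    have hdim1 : dimA (amin T w1) = e + k := by
      rw [hw1def, hεp δ hδpos hδε]
      rw [hufacet]
      have : dimA (amin T w) = e + (k + 1) := hd
      rw [dimA] at this
      omega
    obtain ⟨w', hw'0, hdist', hdim'⟩ := ih w1 hw1ne hdim1 (η / 2) (by positivity)
    refine ⟨w', hw'0, ?_, hdim'⟩
    calc dist w' w ≤ dist w' w1 + dist w1 w := dist_triangle _ _ _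
      _ < η / 2 + η / 2 := add_lt_add hdist' hdist1
      _ = η := by ring

lemma closure_dim_ge (T : Finset E) (e : ℕ) {w : E}
    (hw : w ∈ closure {w' : E | w' ≠ 0 ∧ dimA (amin T w') = e}) :
    e ≤ dimA (amin T w) := by
  classical
  set Wset := {w' : E | w' ≠ 0 ∧ dimA (amin T w') = e} with hWset
  have hcover : Wset ⊆ ⋃ A ∈ (↑T.powerset : Set (Finset E)),
      (Wset ∩ {w' | amin T w' = A}) := by
    intro w' hw'
    exact Set.mem_biUnion (by simp [Finset.mem_powerset, amin_subset]) ⟨hw', rfl⟩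
  have hwA' : w ∈ ⋃ A ∈ (↑T.powerset : Set (Finset E)),
      closure (Wset ∩ {w' | amin T w' = A}) := by
    have h1 := closure_mono hcover hw
    rwa [Set.Finite.closure_biUnion (T.powerset.finite_toSet) _] at h1
  obtain ⟨A, _, hwA⟩ := Set.mem_iUnion₂.1 hwA'
  rcases (Wset ∩ {w' | amin T w' = A}).eq_empty_or_nonempty with hemp | ⟨w0, hw0W, hw0A⟩
  · rw [hemp, closure_empty] at hwA
    exact absurd hwA (Set.notMem_empty w)
  · have hAdim : dimA A = e := by
      have := hw0W.2
      rwa [show amin T w0 = A from hw0A] at this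
    have hAT : A ⊆ T := by
      rw [← show amin T w0 = A from hw0A]
      exact amin_subset T w0
    set Z : Set E := ⋂ a ∈ (A : Set E), ⋂ t ∈ (T : Set E),
      {w' : E | (inner ℝ w' a : ℝ) ≤ inner ℝ w' t} with hZ
    have hZclosed : IsClosed Z := by
      refine isClosed_biInter fun a _ => isClosed_biInter fun t _ => ?_
      exact isClosed_le (continuous_id.inner continuous_const)
        (continuous_id.inner continuous_const)
    have hsub : Wset ∩ {w' | amin T w' = A} ⊆ Z := by
      rintro w' ⟨_, hw'A⟩
      refine Set.mem_iInter₂.2 fun a ha => Set.mem_iInter₂.2 fun t ht => ?_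
      have : a ∈ amin T w' := by rw [show amin T w' = A from hw'A]; exact_mod_cast ha
      exact (mem_amin.1 this).2 t (by exact_mod_cast ht)
    have hwZ : w ∈ Z := closure_minimal hsub hZclosed hwA
    have hAmin : (A : Set E) ⊆ ((amin T w : Finset E) : Set E) := by
      intro a ha
      have h1 := Set.mem_iInter₂.1 hwZ a ha
      refine Finset.mem_coe.2 (mem_amin.2 ⟨hAT (Finset.mem_coe.1 ha), fun s hs => ?_⟩)
      exact Set.mem_iInter₂.1 h1 s (Finset.mem_coe.2 hs)
    rw [← hAdim, dimA, dimA]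
    exact Submodule.finrank_mono (vectorSpan_mono' hAmin)

end AuxPolytope

/-- Let `B` be a full-dimensional polytope in `ℝⁿ` and, for
`0 ≤ j ≤ n-1`, let `W j` be the set of nonzero `w` whose minimizing face
`Face B w` has dimension `n-1-j` (dimension = rank of the direction of the
affine span). Then the closure of `W j` inside `ℝⁿ \ {0}` is
`{w ≠ 0 | dim (Face B w) ≥ n-1-j} = W 0 ∪ ⋯ ∪ W j`. -/
theorem stmt_5 {n : ℕ} (hn : 1 ≤ n)
    (S : Set (EuclideanSpace ℝ (Fin n))) (hS : S.Finite)
    (B : Set (EuclideanSpace ℝ (Fin n))) (hB : B = convexHull ℝ S)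
    (hint : (interior B).Nonempty)
    (W : ℕ → Set (EuclideanSpace ℝ (Fin n)))
    (hW : ∀ j, W j = {w | w ≠ 0 ∧
      Module.finrank ℝ (affineSpan ℝ (Face B w)).direction = n - 1 - j})
    (j : ℕ) (hj : j ≤ n - 1) :
    closure (W j) ∩ {w : EuclideanSpace ℝ (Fin n) | w ≠ 0}
      = {w : EuclideanSpace ℝ (Fin n) | w ≠ 0 ∧
          n - 1 - j ≤ Module.finrank ℝ (affineSpan ℝ (Face B w)).direction} ∧
    closure (W j) ∩ {w : EuclideanSpace ℝ (Fin n) | w ≠ 0}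
      = ⋃ i ∈ Finset.Iic j, W i := by
  classical
  set T : Finset (EuclideanSpace ℝ (Fin n)) := hS.toFinset with hTdef
  have hTS : (T : Set (EuclideanSpace ℝ (Fin n))) = S := hS.coe_toFinset
  have hBne : B.Nonempty := hint.mono interior_subset
  have hT : T.Nonempty := by
    rcases T.eq_empty_or_nonempty with h | h
    · exfalso
      have : S = ∅ := by rw [← hTS, h]; simp
      rw [hB, this, convexHull_empty] at hBne
      exact Set.not_nonempty_empty hBne
    · exact h
  have key : ∀ w : EuclideanSpace ℝ (Fin n),
      Face B w = convexHull ℝ ((amin T w : Finset _) : Set _) := by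
    intro w
    have h1 : Face B w = gface B w := rfl
    rw [h1, hB, ← hTS]
    exact gface_hull T hT w
  have hdim : ∀ w : EuclideanSpace ℝ (Fin n),
      Module.finrank ℝ (affineSpan ℝ (Face B w)).direction = dimA (amin T w) := by
    intro w
    rw [key w, affineSpan_convexHull, direction_affineSpan]
    rfl
  have hn' : Module.finrank ℝ (EuclideanSpace ℝ (Fin n)) = n := finrank_euclideanSpace_fin
  have hWeq : W j = {w' : EuclideanSpace ℝ (Fin n) |
      w' ≠ 0 ∧ dimA (amin T w') = n - 1 - j} := by
    rw [hW j]
    ext w'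
    rw [Set.mem_setOf_eq, Set.mem_setOf_eq, hdim w']
  have h1 : closure (W j) ∩ {w : EuclideanSpace ℝ (Fin n) | w ≠ 0}
      = {w : EuclideanSpace ℝ (Fin n) | w ≠ 0 ∧
          n - 1 - j ≤ Module.finrank ℝ (affineSpan ℝ (Face B w)).direction} := by
    apply Set.Subset.antisymm
    · rintro w ⟨hwc, hw0⟩
      refine ⟨hw0, ?_⟩
      rw [hdim w]
      rw [hWeq] at hwc
      exact closure_dim_ge T (n - 1 - j) hwc
    · rintro w ⟨hw0, hge⟩
      rw [hdim w] at hge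
      refine ⟨?_, hw0⟩
      rw [Metric.mem_closure_iff]
      intro η hη
      obtain ⟨w', hw'0, hdist, hdim'⟩ := approx T hT (n - 1 - j)
        (dimA (amin T w) - (n - 1 - j)) w hw0 (by omega) η hη
      refine ⟨w', ?_, by rw [dist_comm]; exact hdist⟩
      rw [hWeq]
      exact ⟨hw'0, hdim'⟩
  refine ⟨h1, ?_⟩
  rw [h1]
  apply Set.Subset.antisymm
  · rintro w ⟨hw0, hge⟩
    rw [hdim w] at hge
    have hle : dimA (amin T w) ≤ n - 1 := by
      have := dimA_amin_le (T := T) w hw0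
      rwa [hn'] at this
    refine Set.mem_biUnion (Finset.mem_Iic.2 (show n - 1 - dimA (amin T w) ≤ j by omega)) ?_
    rw [hW]
    refine ⟨hw0, ?_⟩
    rw [hdim w]
    omega
  · intro w hw
    obtain ⟨i, hi, hwi⟩ := Set.mem_iUnion₂.1 hw
    rw [hW i] at hwi
    obtain ⟨hw0, hdimi⟩ := hwi
    have hi' : i ≤ j := Finset.mem_Iic.1 hi
    exact ⟨hw0, by omega⟩
end

section
/- Let B ⊆ ℝⁿ be the convex hull of a finite set of points with 0 in its interior and B = -B. Let w₀ ∈ ℝⁿ be nonzero and F := Face_B(w₀) an exposed face of B, and define the dual face F* := {y ∈ ℝⁿ | ⟪y, x⟫ ≤ 1 for all x ∈ B, and ⟪y, x⟫ = 1 for all x ∈ F} (a face of the dual polytope B* = polar of B). Let N ⊆ ℝⁿ be a linear subspace. Then there exists a nonzero w ∈ N with Face_B(w) = F if and only if N meets the relative interior (intrinsicInterior) of F*, i.e. N ∩ intrinsicInterior(F*) ≠ ∅. (This is the characterization Type(N) = {F a face of B | N ∩ F* ≠ ∅}, made precise by taking the relative interior of the dual face.) -/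
/-- From a point of the intrinsic interior of `C`, one can move slightly away from
any point of `C` while staying in `C`. -/
lemma relint_extend {E : Type*} [NormedAddCommGroup E] [NormedSpace ℝ E]
    {C : Set E} {y p : E} (hy : y ∈ intrinsicInterior ℝ C) (hp : p ∈ C) :
    ∃ ε : ℝ, 0 < ε ∧ y + ε • (y - p) ∈ C := by
  obtain ⟨y', hy', rfl⟩ := mem_intrinsicInterior.mp hy
  have hpspan : p ∈ affineSpan ℝ C := subset_affineSpan ℝ C hp
  have hmem : ∀ t : ℝ, (y' : E) + t • ((y' : E) - p) ∈ affineSpan ℝ C := by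
    intro t
    have := (affineSpan ℝ C).smul_vsub_vadd_mem t y'.2 hpspan y'.2
    simpa [vsub_eq_sub, vadd_eq_add, add_comm] using this
  set f : ℝ → affineSpan ℝ C := fun t => ⟨(y' : E) + t • ((y' : E) - p), hmem t⟩ with hf
  have hfc : Continuous f := by
    apply Continuous.subtype_mk
    exact continuous_const.add (continuous_id.smul continuous_const)
  have h0 : f 0 = y' := by apply Subtype.ext; simp [hf]
  have hnh : f ⁻¹' interior ((↑) ⁻¹' C : Set (affineSpan ℝ C)) ∈ nhds (0 : ℝ) := by
    apply hfc.continuousAt.preimage_mem_nhds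
    rw [h0]
    exact isOpen_interior.mem_nhds hy'
  obtain ⟨ε, hε0, hε⟩ := Metric.mem_nhds_iff.mp hnh
  refine ⟨ε / 2, by positivity, ?_⟩
  have hball : (ε / 2 : ℝ) ∈ Metric.ball (0 : ℝ) ε := by
    simp only [Metric.mem_ball, Real.dist_eq, sub_zero, abs_of_pos (by positivity : (0:ℝ) < ε/2)]
    linarith
  have hmem2 : f (ε / 2) ∈ ((↑) ⁻¹' C : Set (affineSpan ℝ C)) := interior_subset (hε hball)
  exact hmem2

/-- An open segment from an intrinsic interior point to a point of a convex set
stays in the intrinsic interior. -/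
lemma relint_segment {E : Type*} [NormedAddCommGroup E] [NormedSpace ℝ E]
    {C : Set E} (hC : Convex ℝ C) {z w : E} (hz : z ∈ intrinsicInterior ℝ C)
    (hw : w ∈ C) {a b : ℝ} (ha : 0 < a) (hb : 0 < b) (hab : a + b = 1) :
    a • z + b • w ∈ intrinsicInterior ℝ C := by
  obtain ⟨z', hz', rfl⟩ := mem_intrinsicInterior.mp hz
  have hwspan : w ∈ affineSpan ℝ C := subset_affineSpan ℝ C hw
  have hymem : a • (z' : E) + b • w ∈ affineSpan ℝ C := by
    have h := (affineSpan ℝ C).smul_vsub_vadd_mem b hwspan z'.2 z'.2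
    have heq : b • (w - (z' : E)) + (z' : E) = a • (z' : E) + b • w := by
      match_scalars <;> linarith
    simpa [vsub_eq_sub, vadd_eq_add, heq] using h
  set g : affineSpan ℝ C → affineSpan ℝ C := fun x =>
    ⟨a⁻¹ • ((x : E) - w) + w, by
      have := (affineSpan ℝ C).smul_vsub_vadd_mem a⁻¹ x.2 hwspan hwspan
      simpa [vsub_eq_sub, vadd_eq_add] using this⟩ with hg
  have hgc : Continuous g := by
    apply Continuous.subtype_mk
    exact ((continuous_subtype_val.sub continuous_const).const_smul _).add continuous_const
  have hgy : g ⟨a • (z' : E) + b • w, hymem⟩ = z' := by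
    apply Subtype.ext
    show a⁻¹ • ((a • (z' : E) + b • w) - w) + w = (z' : E)
    have hbw : a • (z' : E) + b • w - w = a • ((z' : E) - w) := by
      match_scalars <;> linarith
    rw [hbw, smul_smul, inv_mul_cancel₀ ha.ne', one_smul, sub_add_cancel]
  have hgU : g ⁻¹' ((↑) ⁻¹' C : Set (affineSpan ℝ C)) ⊆
      ((↑) ⁻¹' C : Set (affineSpan ℝ C)) := by
    intro x hx
    have hgx : a⁻¹ • ((x : E) - w) + w ∈ C := hx
    have hxe : (x : E) = a • (a⁻¹ • ((x : E) - w) + w) + b • w := by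
      rw [smul_add, smul_smul, mul_inv_cancel₀ ha.ne', one_smul]
      match_scalars <;> linarith
    show (x : E) ∈ C
    rw [hxe]
    exact hC hgx hw ha.le hb.le hab
  have hnhds : ((↑) ⁻¹' C : Set (affineSpan ℝ C)) ∈
      nhds (⟨a • (z' : E) + b • w, hymem⟩ : affineSpan ℝ C) := by
    apply Filter.mem_of_superset _ hgU
    apply hgc.continuousAt.preimage_mem_nhds
    rw [hgy]
    exact mem_interior_iff_mem_nhds.mp hz'
  exact mem_intrinsicInterior.mpr
    ⟨⟨_, hymem⟩, mem_interior_iff_mem_nhds.mpr hnhds, rfl⟩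

/-- For a centrally symmetric full-dimensional polytope `B` with
`0` in its interior, a face `F = Face B w₀`, its dual face
`F* = {y | (∀ x ∈ B, ⟪y,x⟫ ≤ 1) ∧ ∀ x ∈ F, ⟪y,x⟫ = 1}` of the polar dual `B*`,
and a linear subspace `N`, we have: `F` belongs to the type of `N` (i.e. there is
a nonzero `w ∈ N` with `Face B w = F`) iff `N` meets the relative interior of `F*`. -/
theorem stmt_6 {n : ℕ}
    (S : Set (EuclideanSpace ℝ (Fin n))) (hS : S.Finite)
    (B : Set (EuclideanSpace ℝ (Fin n))) (hB : B = convexHull ℝ S)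
    (h0 : (0 : EuclideanSpace ℝ (Fin n)) ∈ interior B) (hsymm : B = -B)
    (w₀ : EuclideanSpace ℝ (Fin n)) (hw₀ : w₀ ≠ 0)
    (N : Submodule ℝ (EuclideanSpace ℝ (Fin n))) :
    (∃ w : EuclideanSpace ℝ (Fin n), w ≠ 0 ∧ w ∈ N ∧ Face B w = Face B w₀) ↔
      ((N : Set (EuclideanSpace ℝ (Fin n))) ∩
        intrinsicInterior ℝ
          {y : EuclideanSpace ℝ (Fin n) |
            (∀ x ∈ B, (inner ℝ y x : ℝ) ≤ 1) ∧
            ∀ x ∈ Face B w₀, (inner ℝ y x : ℝ) = 1}).Nonempty := by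
  classical
  set F := Face B w₀ with hFdef
  set Fs := {y : EuclideanSpace ℝ (Fin n) |
      (∀ x ∈ B, (inner ℝ y x : ℝ) ≤ 1) ∧ ∀ x ∈ F, (inner ℝ y x : ℝ) = 1} with hFsdef
  have hBconv : Convex ℝ B := hB ▸ convex_convexHull ℝ S
  have hBcomp : IsCompact B := hB ▸ hS.isCompact_convexHull (𝕜 := ℝ)
  have hBne : B.Nonempty := ⟨0, interior_subset h0⟩
  have hSsub : S ⊆ B := hB ▸ subset_convexHull ℝ S
  -- existence of a negative minimum for any nonzero functional
  have hmin : ∀ w : EuclideanSpace ℝ (Fin n), w ≠ 0 →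
      ∃ x₀ ∈ B, (inner ℝ w x₀ : ℝ) < 0 ∧ ∀ y ∈ B, (inner ℝ w x₀ : ℝ) ≤ (inner ℝ w y : ℝ) := by
    intro w hw
    obtain ⟨x₀, hx₀B, hx₀min⟩ := hBcomp.exists_isMinOn hBne
      ((continuous_const.inner continuous_id).continuousOn :
        ContinuousOn (fun x : EuclideanSpace ℝ (Fin n) => (inner ℝ w x : ℝ)) B)
    have hmin' : ∀ y ∈ B, (inner ℝ w x₀ : ℝ) ≤ (inner ℝ w y : ℝ) := fun y hy =>
      isMinOn_iff.mp hx₀min y hy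
    refine ⟨x₀, hx₀B, ?_, hmin'⟩
    obtain ⟨ε, hε, hball⟩ := Metric.mem_nhds_iff.mp (mem_interior_iff_mem_nhds.mp h0)
    have hwn : (0 : ℝ) < ‖w‖ := norm_pos_iff.mpr hw
    set p : EuclideanSpace ℝ (Fin n) := (-(ε / (2 * ‖w‖))) • w with hp
    have hpB : p ∈ B := by
      apply hball
      have hnp : ‖p‖ = ε / 2 := by
        rw [hp, norm_smul, Real.norm_eq_abs, abs_neg, abs_of_pos (by positivity)]
        field_simp [hwn.ne']
      rw [Metric.mem_ball, dist_zero_right, hnp]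
      linarith
    have hneg : (inner ℝ w p : ℝ) < 0 := by
      rw [hp, real_inner_smul_right, real_inner_self_eq_norm_sq]
      have h1 : (0:ℝ) < ε / (2 * ‖w‖) * ‖w‖ ^ 2 := by positivity
      nlinarith
    exact lt_of_le_of_lt (hmin' p hpB) hneg
  -- the dual point of a nonzero functional
  have hdual : ∀ w x₀ : EuclideanSpace ℝ (Fin n), x₀ ∈ B → (inner ℝ w x₀ : ℝ) < 0 →
      (∀ y ∈ B, (inner ℝ w x₀ : ℝ) ≤ (inner ℝ w y : ℝ)) →
      (∀ x ∈ B, (inner ℝ (((inner ℝ w x₀ : ℝ))⁻¹ • w) x : ℝ) ≤ 1) ∧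
      Face B w = {x | x ∈ B ∧ (inner ℝ (((inner ℝ w x₀ : ℝ))⁻¹ • w) x : ℝ) = 1} := by
    intro w x₀ hx₀B hneg hmin'
    set m := (inner ℝ w x₀ : ℝ) with hm
    have hm0 : m ≠ 0 := ne_of_lt hneg
    have h1 : ∀ x ∈ B, (inner ℝ (m⁻¹ • w) x : ℝ) ≤ 1 := by
      intro x hx
      rw [real_inner_smul_left]
      have h2 := hmin' x hx
      have h3 : m⁻¹ * (inner ℝ w x : ℝ) ≤ m⁻¹ * m :=
        mul_le_mul_of_nonpos_left h2 (inv_nonpos.mpr hneg.le)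
      rwa [inv_mul_cancel₀ hm0] at h3
    refine ⟨h1, ?_⟩
    ext x
    simp only [Face, Set.mem_setOf_eq]
    constructor
    · rintro ⟨hxB, hxmin⟩
      refine ⟨hxB, ?_⟩
      have h2 : (inner ℝ w x : ℝ) = m := le_antisymm (hxmin x₀ hx₀B) (hmin' x hxB)
      rw [real_inner_smul_left, h2, inv_mul_cancel₀ hm0]
    · rintro ⟨hxB, hx1⟩
      refine ⟨hxB, fun y hy => ?_⟩
      rw [real_inner_smul_left] at hx1
      have h2 : (inner ℝ w x : ℝ) = m := by
        have h := congrArg (fun r : ℝ => m * r) hx1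
        simpa only [← mul_assoc, mul_inv_cancel₀ hm0, one_mul, mul_one] using h
      rw [h2]
      exact hmin' y hy
  -- convexity of the dual face
  have hFsconv : Convex ℝ Fs := by
    intro y1 h1 y2 h2 a b ha hb hab
    have e : ∀ x : EuclideanSpace ℝ (Fin n),
        (inner ℝ (a • y1 + b • y2) x : ℝ) = a * (inner ℝ y1 x : ℝ) + b * (inner ℝ y2 x : ℝ) := by
      intro x
      rw [inner_add_left, real_inner_smul_left, real_inner_smul_left]
    constructor
    · intro x hx
      rw [e x]
      have u := h1.1 x hx
      have v := h2.1 x hx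
      nlinarith
    · intro x hx
      rw [e x, h1.2 x hx, h2.2 x hx]
      linarith
  -- data from w₀
  obtain ⟨x₀, hx₀B, hx₀neg, hx₀min⟩ := hmin w₀ hw₀
  obtain ⟨hy₀B, hFexp₀⟩ := hdual w₀ x₀ hx₀B hx₀neg hx₀min
  set y₀ := ((inner ℝ w₀ x₀ : ℝ))⁻¹ • w₀ with hy₀
  have hx₀F : x₀ ∈ F := ⟨hx₀B, hx₀min⟩
  have hy₀Fs : y₀ ∈ Fs := by
    refine ⟨hy₀B, fun x hx => ?_⟩
    have : x ∈ {x | x ∈ B ∧ (inner ℝ y₀ x : ℝ) = 1} := hFexp₀ ▸ hx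
    exact this.2
  constructor
  · -- forward direction
    rintro ⟨w, hw0, hwN, hFace⟩
    obtain ⟨x₁, hx₁B, hx₁neg, hx₁min⟩ := hmin w hw0
    obtain ⟨hyB, hFexp⟩ := hdual w x₁ hx₁B hx₁neg hx₁min
    set y := ((inner ℝ w x₁ : ℝ))⁻¹ • w with hy
    rw [hFace] at hFexp
    have hyN : y ∈ N := N.smul_mem _ hwN
    have hyFs : y ∈ Fs := by
      refine ⟨hyB, fun x hx => ?_⟩
      have : x ∈ {x | x ∈ B ∧ (inner ℝ y x : ℝ) = 1} := hFexp ▸ hx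
      exact this.2
    obtain ⟨z, hzrel⟩ := Set.Nonempty.intrinsicInterior hFsconv ⟨y, hyFs⟩
    have hzFs : z ∈ Fs := intrinsicInterior_subset hzrel
    -- choose ε small enough
    have key : ∀ s : EuclideanSpace ℝ (Fin n), ∃ δ : ℝ, 0 < δ ∧
        (s ∈ S → ∀ ε : ℝ, 0 < ε → ε ≤ δ →
          (inner ℝ y s : ℝ) + ε * ((inner ℝ y s : ℝ) - (inner ℝ z s : ℝ)) ≤ 1) := by
      intro s
      by_cases hsS : s ∈ S
      · have hsB : s ∈ B := hSsub hsS
        have hys : (inner ℝ y s : ℝ) ≤ 1 := hyFs.1 s hsB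
        by_cases h1 : (inner ℝ y s : ℝ) = 1
        · refine ⟨1, one_pos, fun _ ε hε _ => ?_⟩
          have hsF : s ∈ F := by
            rw [hFexp]
            exact ⟨hsB, h1⟩
          have hz1 := hzFs.2 s hsF
          have hd : (inner ℝ y s : ℝ) - (inner ℝ z s : ℝ) = 0 := by rw [h1, hz1]; ring
          have : ε * ((inner ℝ y s : ℝ) - (inner ℝ z s : ℝ)) = 0 := by rw [hd, mul_zero]
          linarith
        · have hlt : (inner ℝ y s : ℝ) < 1 := lt_of_le_of_ne hys h1
          by_cases hd : (inner ℝ y s : ℝ) - (inner ℝ z s : ℝ) ≤ 0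
          · refine ⟨1, one_pos, fun _ ε hε _ => ?_⟩
            nlinarith
          · push_neg at hd
            refine ⟨(1 - (inner ℝ y s : ℝ)) / ((inner ℝ y s : ℝ) - (inner ℝ z s : ℝ)),
              div_pos (by linarith) hd, fun _ ε hε hε' => ?_⟩
            have := (le_div_iff₀ hd).mp hε'
            linarith
      · exact ⟨1, one_pos, fun h => absurd h hsS⟩
    choose δ hδpos hδ using key
    have hSne : S.Nonempty := by
      rcases Set.eq_empty_or_nonempty S with h | h
      · exfalso
        rw [h, convexHull_empty] at hB
        rw [hB] at hBne
        exact Set.not_nonempty_empty hBne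
      · exact h
    have hTne : hS.toFinset.Nonempty := hS.toFinset_nonempty.mpr hSne
    obtain ⟨ε, hεpos, hεle⟩ : ∃ ε : ℝ, 0 < ε ∧ ∀ s ∈ S, ε ≤ δ s := by
      refine ⟨hS.toFinset.inf' hTne δ, ?_, ?_⟩
      · rw [Finset.lt_inf'_iff]
        intro s _
        exact hδpos s
      · intro s hs
        exact Finset.inf'_le δ (hS.mem_toFinset.mpr hs)
    set w' := y + ε • (y - z) with hw'
    have hw'inner : ∀ x : EuclideanSpace ℝ (Fin n),
        (inner ℝ w' x : ℝ) = (inner ℝ y x : ℝ) + ε * ((inner ℝ y x : ℝ) - (inner ℝ z x : ℝ)) := by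
      intro x
      simp only [hw', inner_add_left, real_inner_smul_left, inner_sub_left]
    have hw'Fs : w' ∈ Fs := by
      constructor
      · intro x hx
        have hconv : Convex ℝ {x : EuclideanSpace ℝ (Fin n) | (inner ℝ w' x : ℝ) ≤ 1} := by
          apply convex_halfSpace_le
          exact ⟨fun u v => inner_add_right w' u v,
            fun c u => by rw [real_inner_smul_right]; rfl⟩
        have hsub : B ⊆ {x : EuclideanSpace ℝ (Fin n) | (inner ℝ w' x : ℝ) ≤ 1} := by
          rw [hB]
          apply convexHull_min _ hconv
          intro s hs
          have := hδ s hs ε hεpos (hεle s hs)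
          rw [Set.mem_setOf_eq, hw'inner s]
          exact this
        exact hsub hx
      · intro x hx
        rw [hw'inner x, hyFs.2 x hx, hzFs.2 x hx]
        ring
    have h1e : (0:ℝ) < 1 + ε := by linarith
    have hseg := relint_segment hFsconv hzrel hw'Fs
      (div_pos hεpos h1e) (div_pos one_pos h1e)
      (by rw [← add_div, add_comm ε 1, div_self h1e.ne'])
    have hyeq : (ε / (1 + ε)) • z + (1 / (1 + ε)) • w' = y := by
      rw [hw']
      match_scalars <;> field_simp <;> ring
    rw [hyeq] at hseg
    exact ⟨y, hyN, hseg⟩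
  · -- backward direction
    rintro ⟨y, hyN, hyrel⟩
    have hyFs : y ∈ Fs := intrinsicInterior_subset hyrel
    have hyx₀ : (inner ℝ y x₀ : ℝ) = 1 := hyFs.2 x₀ hx₀F
    have hy0 : y ≠ 0 := by
      rintro rfl
      rw [inner_zero_left] at hyx₀
      norm_num at hyx₀
    refine ⟨-y, neg_ne_zero.mpr hy0, N.neg_mem hyN, ?_⟩
    have hmax : ∀ x ∈ B, (inner ℝ y x : ℝ) ≤ 1 := hyFs.1
    ext x
    simp only [Face, Set.mem_setOf_eq]
    constructor
    · rintro ⟨hxB, hxm⟩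
      have h1 : (inner ℝ y x : ℝ) = 1 := by
        refine le_antisymm (hmax x hxB) ?_
        have h2 := hxm x₀ hx₀B
        rw [inner_neg_left, inner_neg_left] at h2
        linarith
      obtain ⟨ε, hε, hwε⟩ := relint_extend hyrel hy₀Fs
      have hle := hwε.1 x hxB
      have e : (inner ℝ (y + ε • (y - y₀)) x : ℝ)
          = (inner ℝ y x : ℝ) + ε * ((inner ℝ y x : ℝ) - (inner ℝ y₀ x : ℝ)) := by
        rw [inner_add_left, real_inner_smul_left, inner_sub_left]
      rw [e, h1] at hle
      have hy₀x : (inner ℝ y₀ x : ℝ) ≤ 1 := hy₀B x hxB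
      have h3 : (inner ℝ y₀ x : ℝ) = 1 := by nlinarith
      show x ∈ F
      rw [hFdef, hFexp₀]
      exact ⟨hxB, h3⟩
    · intro hxF
      have h1 := hyFs.2 x hxF
      have hxB : x ∈ B := hxF.1
      refine ⟨hxB, fun x' hx' => ?_⟩
      have h2 := hmax x' hx'
      rw [inner_neg_left, inner_neg_left]
      simp only [neg_le_neg_iff]
      linarith
end

section
/- Let K be a field, n ≥ 0, d ≥ 1, and let R := K[u₁,…,uₙ] (the multivariate polynomial ring MvPolynomial (Fin n) K). Let f = Σ_{i=0}^d a_i t^i and g = Σ_{i=0}^d b_i t^i be polynomials in R[t] whose coefficients satisfy totalDegree(a_i) ≤ d - i and totalDegree(b_i) ≤ d - i for all 0 ≤ i ≤ d. Then the determinant of the 2d × 2d Sylvester matrix of f and g formed with respect to degree d (whose first d rows are the shifted coefficient sequences of f and whose last d rows are the shifted coefficient sequences of g), i.e. the resultant res(f, g) ∈ R, has total degree at most d². -/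
/-- The Sylvester matrix (with respect to formal degrees `m` and `k`) of two
polynomials with coefficient sequences `a` (degree `m`, occupying the first `k`
rows) and `b` (degree `k`, occupying the last `m` rows): the `(k+m) × (k+m)`
matrix with entries `T_{i, i+j} = a_{m-j}` for the first `k` rows and
`T_{i, i-k+j} = b_{k-j}` for the last `m` rows (0-indexed). Its determinant is
the resultant. -/
def sylvGen {R : Type*} [CommRing R] (m k : ℕ) (a b : ℕ → R) :
    Matrix (Fin (k + m)) (Fin (k + m)) R :=
  Matrix.of fun i j =>
    if (i : ℕ) < k then
      (if (i : ℕ) ≤ (j : ℕ) ∧ (j : ℕ) ≤ (i : ℕ) + m then a (m - ((j : ℕ) - (i : ℕ))) else 0)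
    else
      (if (j : ℕ) ≤ (i : ℕ) ∧ (i : ℕ) ≤ (j : ℕ) + k then b ((i : ℕ) - (j : ℕ)) else 0)

/-- If `f = Σ_{i=0}^d a_i t^i` and `g = Σ_{i=0}^d b_i t^i` have
coefficients in `R = K[u₁,…,uₙ]` with `totalDegree (a i) ≤ d - i` and
`totalDegree (b i) ≤ d - i`, then the determinant of their `2d × 2d` Sylvester
matrix (the resultant `res(f,g) ∈ R`) has total degree at most `d²`. -/
theorem stmt_10 {K : Type*} [Field K] (n d : ℕ) (hd : 1 ≤ d)
    (a b : ℕ → MvPolynomial (Fin n) K)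
    (ha : ∀ i, i ≤ d → (a i).totalDegree ≤ d - i)
    (hb : ∀ i, i ≤ d → (b i).totalDegree ≤ d - i) :
    ((sylvGen d d a b).det).totalDegree ≤ d ^ 2 := by
  classical
  rw [Matrix.det_apply']
  refine (MvPolynomial.totalDegree_finset_sum _ _).trans (Finset.sup_le fun σ _ => ?_)
  refine (MvPolynomial.totalDegree_mul _ _).trans ?_
  have hε : (((Equiv.Perm.sign σ : ℤ) : MvPolynomial (Fin n) K)).totalDegree = 0 := by
    rw [show ((Equiv.Perm.sign σ : ℤ) : MvPolynomial (Fin n) K)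
        = MvPolynomial.C ((Equiv.Perm.sign σ : ℤ) : K) from (map_intCast (MvPolynomial.C : K →+* MvPolynomial (Fin n) K) _).symm,
      MvPolynomial.totalDegree_C]
  rw [hε, zero_add]
  by_cases h0 : ∃ i, sylvGen d d a b (σ i) i = 0
  · obtain ⟨i, hi⟩ := h0
    rw [Finset.prod_eq_zero (f := fun j => sylvGen d d a b (σ j) j) (Finset.mem_univ i) hi, MvPolynomial.totalDegree_zero]
    exact Nat.zero_le _
  push_neg at h0
  set c : Fin (d + d) → ℕ :=
    fun i => if (σ i : ℕ) < d then (i : ℕ) - (σ i : ℕ) else d - ((σ i : ℕ) - (i : ℕ)) with hc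
  have hcond : ∀ i : Fin (d + d),
      (((σ i : ℕ) < d) → ((σ i : ℕ) ≤ i ∧ (i : ℕ) ≤ (σ i : ℕ) + d)) ∧
      ((¬ (σ i : ℕ) < d) → ((i : ℕ) ≤ (σ i : ℕ) ∧ (σ i : ℕ) ≤ (i : ℕ) + d)) := by
    intro i
    have := h0 i
    simp only [sylvGen, Matrix.of_apply] at this
    constructor
    · intro h
      rw [if_pos h] at this
      by_contra hcon
      rw [if_neg (by tauto)] at this
      exact this rfl
    · intro h
      rw [if_neg h] at this
      by_contra hcon
      rw [if_neg (by tauto)] at this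
      exact this rfl
  have hdeg : ∀ i : Fin (d + d), (sylvGen d d a b (σ i) i).totalDegree ≤ c i := by
    intro i
    simp only [sylvGen, Matrix.of_apply, hc]
    by_cases h : (σ i : ℕ) < d
    · obtain ⟨h1, h2⟩ := (hcond i).1 h
      rw [if_pos h, if_pos ⟨h1, h2⟩]
      have hle : (i : ℕ) - (σ i : ℕ) ≤ d := by omega
      have := ha (d - ((i : ℕ) - (σ i : ℕ))) (by omega)
      rw [Nat.sub_sub_self hle] at this
      simpa [h] using this
    · obtain ⟨h1, h2⟩ := (hcond i).2 h
      rw [if_neg h, if_pos ⟨h1, h2⟩]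
      have := hb ((σ i : ℕ) - (i : ℕ)) (by omega)
      simpa [h] using this
  refine (MvPolynomial.totalDegree_finset_prod _ _).trans ?_
  refine (Finset.sum_le_sum fun i _ => hdeg i).trans ?_
  -- now bound ∑ c i ≤ d ^ 2
  set S : Finset (Fin (d + d)) := Finset.univ.filter fun i => ¬ (σ i : ℕ) < d with hS
  have hcard : S.card ≤ d := by
    have himg : S.image σ ⊆ Finset.Ici (⟨d, by omega⟩ : Fin (d + d)) := by
      intro j hj
      obtain ⟨i, hi, rfl⟩ := Finset.mem_image.1 hj
      simp only [hS, Finset.mem_filter] at hi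
      simp [Finset.mem_Ici, Fin.le_def]
      omega
    have := Finset.card_le_card himg
    rwa [Finset.card_image_of_injective _ σ.injective, Fin.card_Ici,
      show (((⟨d, by omega⟩ : Fin (d + d)) : ℕ)) = d from rfl, Nat.add_sub_cancel] at this
  have hsum : ((∑ i, c i : ℕ) : ℤ) = (S.card : ℤ) * d := by
    push_cast
    rw [← Finset.sum_filter_add_sum_filter_not Finset.univ (fun i => ¬ (σ i : ℕ) < d)]
    have e1 : ∑ i ∈ Finset.univ.filter (fun i => ¬ (σ i : ℕ) < d), ((c i : ℤ))
        = ∑ i ∈ S, ((d : ℤ) - ((σ i : ℕ) : ℤ) + (i : ℕ)) := by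
      refine Finset.sum_congr rfl fun i hi => ?_
      simp only [hS, Finset.mem_filter] at hi
      obtain ⟨h1, h2⟩ := (hcond i).2 hi.2
      simp only [hc, if_neg hi.2]
      omega
    have e2 : ∑ i ∈ Finset.univ.filter (fun i => ¬¬ (σ i : ℕ) < d), ((c i : ℤ))
        = ∑ i ∈ Finset.univ.filter (fun i => ¬¬ (σ i : ℕ) < d), (((i : ℕ) : ℤ) - ((σ i : ℕ) : ℤ)) := by
      refine Finset.sum_congr rfl fun i hi => ?_
      simp only [Finset.mem_filter, not_not] at hi
      obtain ⟨h1, h2⟩ := (hcond i).1 hi.2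
      simp only [hc, if_pos hi.2]
      omega
    rw [e1, e2]
    have esum : ∑ i : Fin (d + d), (((σ i : ℕ) : ℤ)) = ∑ i : Fin (d + d), ((i : ℕ) : ℤ) :=
      Equiv.sum_comp σ (fun j => ((j : ℕ) : ℤ))
    have split1 := Finset.sum_filter_add_sum_filter_not Finset.univ
      (fun i : Fin (d + d) => ¬ (σ i : ℕ) < d) (fun i => ((i : ℕ) : ℤ))
    have split2 := Finset.sum_filter_add_sum_filter_not Finset.univ
      (fun i : Fin (d + d) => ¬ (σ i : ℕ) < d) (fun i => ((σ i : ℕ) : ℤ))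
    have hScard : ∑ i ∈ S, (d : ℤ) = (S.card : ℤ) * d := by
      rw [Finset.sum_const, nsmul_eq_mul]
    simp only [Finset.sum_sub_distrib, Finset.sum_add_distrib, hS] at *
    linarith
  have : ((∑ i, c i : ℕ) : ℤ) ≤ (d : ℤ) ^ 2 := by
    rw [hsum, sq]
    have : (S.card : ℤ) ≤ d := by exact_mod_cast hcard
    nlinarith [show (0:ℤ) ≤ d by positivity]
  exact_mod_cast this
end

section
/- Let f ∈ ℝ[x₁,…,xₙ] be a polynomial of total degree d ≥ 1 and let a, b ∈ ℝⁿ. In the polynomial ring ℝ[u₁,…,uₙ][λ], define g₁(λ) := f(u + λ·a) and g₂(λ) := f(u + λ·b), obtained from f by the substitutions x_i ↦ u_i + λ a_i and x_i ↦ u_i + λ b_i respectively; each g_k has degree at most d in λ, and the coefficient of λ^i in g_k has total degree at most d - i in the u-variables. Let R ∈ ℝ[u₁,…,uₙ] be the determinant of the 2d × 2d Sylvester matrix of g₁ and g₂ with respect to degree d (the resultant eliminating λ). Then f(u) divides R in ℝ[u₁,…,uₙ] and totalDegree(R) ≤ d²; consequently R = f · g for some g ∈ ℝ[u₁,…,uₙ]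 with totalDegree(g) ≤ d² - d. (This is the content of the vertex–vertex degree bound: the elimination ideal I_{(F₁,F₂)} for a pair of vertices of the unit ball is generated by f(u)·g(u) of degree at most d², and the corresponding component of the medial axis has degree at most d² - d.) -/
/-- `substLine f a` is `f(u + λ·a)`, the image of `f ∈ ℝ[x₁,…,xₙ]` under the
substitution `xᵢ ↦ uᵢ + λ aᵢ`, viewed as a polynomial in `λ` over `ℝ[u₁,…,uₙ]`. -/
noncomputable def substLine {n : ℕ} (f : MvPolynomial (Fin n) ℝ) (a : Fin n → ℝ) :
    Polynomial (MvPolynomial (Fin n) ℝ) :=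
  MvPolynomial.aeval
    (fun i => Polynomial.C (MvPolynomial.X i) +
      Polynomial.C (MvPolynomial.C (a i)) * Polynomial.X) f

open MvPolynomial

/-- Degree bound for determinants: if each nonzero entry `M i j` has total degree
at most `r i + c j`, the determinant has total degree at most `∑ r + ∑ c`. -/
lemma det_totalDegree_le {n m : ℕ} (M : Matrix (Fin m) (Fin m) (MvPolynomial (Fin n) ℝ))
    (r c : Fin m → ℤ)
    (h : ∀ i j, M i j ≠ 0 → ((M i j).totalDegree : ℤ) ≤ r i + c j)
    (N : ℕ) (hN : (∑ i, r i) + (∑ i, c i) ≤ (N : ℤ)) :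
    M.det.totalDegree ≤ N := by
  rw [Matrix.det_apply']
  refine le_trans (totalDegree_finset_sum _ _) ?_
  rw [Finset.sup_le_iff]
  intro σ _
  refine le_trans (totalDegree_mul _ _) ?_
  have hsgn : ((Equiv.Perm.sign σ : ℤ) : MvPolynomial (Fin n) ℝ).totalDegree = 0 := by
    rw [← map_intCast (C : ℝ →+* MvPolynomial (Fin n) ℝ)]
    exact totalDegree_C _
  rw [hsgn, zero_add]
  by_cases hz : ∃ i, M (σ i) i = 0
  · obtain ⟨i, hi⟩ := hz
    rw [Finset.prod_eq_zero (f := fun k => M (σ k) k) (Finset.mem_univ i) hi]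
    simp
  · push_neg at hz
    refine le_trans (totalDegree_finset_prod _ _) ?_
    have key : ((∑ i, (M (σ i) i).totalDegree : ℕ) : ℤ) ≤ (N : ℤ) := by
      push_cast
      calc (∑ i, ((M (σ i) i).totalDegree : ℤ))
          ≤ ∑ i, (r (σ i) + c i) := Finset.sum_le_sum (fun i _ => h _ _ (hz i))
        _ = (∑ i, r (σ i)) + ∑ i, c i := Finset.sum_add_distrib
        _ = (∑ i, r i) + ∑ i, c i := by rw [Equiv.sum_comp σ r]
        _ ≤ (N : ℤ) := hN
    exact_mod_cast key

/-- The weighted coefficient-degree property: every nonzero `λ^i`-coefficient of `p`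
has total degree at most `s - i`. -/
def QQ {n : ℕ} (p : Polynomial (MvPolynomial (Fin n) ℝ)) (s : ℕ) : Prop :=
  ∀ i, p.coeff i ≠ 0 → ((p.coeff i).totalDegree : ℤ) + i ≤ s

lemma QQ_mono {n : ℕ} {p : Polynomial (MvPolynomial (Fin n) ℝ)} {s t : ℕ}
    (h : QQ p s) (hst : s ≤ t) : QQ p t :=
  fun i hi => (h i hi).trans (by exact_mod_cast hst)

lemma QQ_one {n : ℕ} : QQ (n := n) 1 0 := by
  intro i hi
  rcases Nat.eq_zero_or_pos i with h | h
  · subst h; simp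
  · exfalso; apply hi
    simp [Polynomial.coeff_one, Nat.pos_iff_ne_zero.mp h]

lemma QQ_mul {n : ℕ} {p q : Polynomial (MvPolynomial (Fin n) ℝ)} {s t : ℕ}
    (hp : QQ p s) (hq : QQ q t) : QQ (p * q) (s + t) := by
  intro i hi
  rw [Polynomial.coeff_mul] at hi ⊢
  obtain ⟨x, hx, hxne⟩ := Finset.exists_ne_zero_of_sum_ne_zero hi
  have hx1 : p.coeff x.1 ≠ 0 := fun h => hxne (by simp [h])
  have hx2 : q.coeff x.2 ≠ 0 := fun h => hxne (by simp [h])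
  have h1 := hp x.1 hx1
  have h2 := hq x.2 hx2
  have hxsum : x.1 + x.2 = i := Finset.HasAntidiagonal.mem_antidiagonal.mp hx
  have hdeg : (∑ y ∈ Finset.HasAntidiagonal.antidiagonal i, p.coeff y.1 * q.coeff y.2).totalDegree
      ≤ s + t - i := by
    refine (totalDegree_finset_sum _ _).trans ?_
    rw [Finset.sup_le_iff]
    intro y hy
    by_cases hy1 : p.coeff y.1 = 0
    · simp [hy1]
    by_cases hy2 : q.coeff y.2 = 0
    · simp [hy2]
    have hd1 := hp y.1 hy1
    have hd2 := hq y.2 hy2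
    have hysum : y.1 + y.2 = i := Finset.HasAntidiagonal.mem_antidiagonal.mp hy
    have hmul := totalDegree_mul (p.coeff y.1) (q.coeff y.2)
    omega
  have hcast : ((∑ y ∈ Finset.HasAntidiagonal.antidiagonal i, p.coeff y.1 * q.coeff y.2).totalDegree : ℤ)
      ≤ ((s + t - i : ℕ) : ℤ) := by exact_mod_cast hdeg
  omega

lemma QQ_pow {n : ℕ} {p : Polynomial (MvPolynomial (Fin n) ℝ)} {s : ℕ}
    (hp : QQ p s) (m : ℕ) : QQ (p ^ m) (s * m) := by
  induction m with
  | zero => simpa using QQ_one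
  | succ k ih =>
      rw [pow_succ, Nat.mul_succ]
      exact QQ_mul ih hp

lemma QQ_prod {n : ℕ} {ι : Type*} (s : Finset ι)
    (F : ι → Polynomial (MvPolynomial (Fin n) ℝ)) (g : ι → ℕ)
    (h : ∀ j ∈ s, QQ (F j) (g j)) : QQ (∏ j ∈ s, F j) (∑ j ∈ s, g j) := by
  induction s using Finset.cons_induction with
  | empty => simpa using QQ_one
  | cons a s ha ih =>
      rw [Finset.prod_cons, Finset.sum_cons]
      exact QQ_mul (h a (Finset.mem_cons_self a s))
        (ih fun j hj => h j (Finset.mem_cons_of_mem hj))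

lemma QQ_sum {n : ℕ} {ι : Type*} (s : Finset ι)
    (F : ι → Polynomial (MvPolynomial (Fin n) ℝ)) (N : ℕ)
    (h : ∀ j ∈ s, QQ (F j) N) : QQ (∑ j ∈ s, F j) N := by
  intro i hi
  rw [Polynomial.finset_sum_coeff] at hi ⊢
  obtain ⟨x, hx, hxne⟩ := Finset.exists_ne_zero_of_sum_ne_zero hi
  have hiN := h x hx i hxne
  have hdeg : (∑ y ∈ s, (F y).coeff i).totalDegree ≤ N - i := by
    refine (totalDegree_finset_sum _ _).trans ?_
    rw [Finset.sup_le_iff]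
    intro y hy
    by_cases hz : (F y).coeff i = 0
    · simp [hz]
    · have := h y hy i hz
      omega
  have hcast : ((∑ y ∈ s, (F y).coeff i).totalDegree : ℤ) ≤ ((N - i : ℕ) : ℤ) := by
    exact_mod_cast hdeg
  omega

lemma QQ_CC {n : ℕ} (c : ℝ) : QQ (n := n) (Polynomial.C (MvPolynomial.C c)) 0 := by
  intro i hi
  rcases Nat.eq_zero_or_pos i with h | h
  · subst h; simp
  · exfalso; apply hi
    rw [Polynomial.coeff_C, if_neg (Nat.pos_iff_ne_zero.mp h)]

lemma QQ_lin {n : ℕ} (i : Fin n) (c : ℝ) :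
    QQ (Polynomial.C (MvPolynomial.X i) + Polynomial.C (MvPolynomial.C c) * Polynomial.X) 1 := by
  intro k hk
  match k with
  | 0 =>
      simp only [Polynomial.coeff_add, Polynomial.coeff_C, if_pos rfl,
        Polynomial.coeff_C_mul, Polynomial.coeff_X_zero, mul_zero, add_zero]
      simp [totalDegree_X]
  | 1 =>
      simp [Polynomial.coeff_add, Polynomial.coeff_C, Polynomial.coeff_C_mul,
        Polynomial.coeff_X_one, totalDegree_C]
  | (m + 2) =>
      exfalso; apply hk
      simp [Polynomial.coeff_C, Polynomial.coeff_X]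


lemma QQ_substLine {n : ℕ} (f : MvPolynomial (Fin n) ℝ) (a : Fin n → ℝ) :
    QQ (substLine f a) f.totalDegree := by
  unfold substLine
  set φ : Fin n → Polynomial (MvPolynomial (Fin n) ℝ) :=
    fun i => Polynomial.C (MvPolynomial.X i) +
      Polynomial.C (MvPolynomial.C (a i)) * Polynomial.X with hφ
  have hf : MvPolynomial.aeval φ f
      = ∑ v ∈ f.support, MvPolynomial.aeval φ (monomial v (coeff v f)) := by
    conv_lhs => rw [f.as_sum]
    exact map_sum _ _ _
  rw [hf]
  apply QQ_sum
  intro m hm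
  rw [aeval_monomial]
  have h1 : QQ ((algebraMap ℝ (Polynomial (MvPolynomial (Fin n) ℝ))) (coeff m f) *
      m.prod fun i k => φ i ^ k) (0 + ∑ j ∈ m.support, 1 * m j) := by
    apply QQ_mul
    · have : (algebraMap ℝ (Polynomial (MvPolynomial (Fin n) ℝ))) (coeff m f)
          = Polynomial.C (MvPolynomial.C (coeff m f)) := rfl
      rw [this]; exact QQ_CC _
    · rw [Finsupp.prod]
      exact QQ_prod _ _ _ (fun j _ => QQ_pow (QQ_lin j (a j)) (m j))
  refine QQ_mono h1 ?_
  have : (0 + ∑ j ∈ m.support, 1 * m j) = m.sum fun _ e => e := by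
    rw [zero_add, Finsupp.sum]
    exact Finset.sum_congr rfl (fun j _ => one_mul _)
  rw [this]
  exact le_totalDegree hm

lemma substLine_coeff_zero {n : ℕ} (f : MvPolynomial (Fin n) ℝ) (a : Fin n → ℝ) :
    (substLine f a).coeff 0 = f := by
  have key : (Polynomial.evalRingHom (0 : MvPolynomial (Fin n) ℝ)).comp
      (MvPolynomial.aeval (fun i => Polynomial.C (MvPolynomial.X i) +
        Polynomial.C (MvPolynomial.C (a i)) * Polynomial.X)).toRingHom
      = RingHom.id (MvPolynomial (Fin n) ℝ) := by
    apply MvPolynomial.ringHom_ext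
    · intro r
      simp [MvPolynomial.algebraMap_eq]
    · intro i
      simp
  have := congrFun (congrArg DFunLike.coe key) f
  simp only [RingHom.comp_apply, RingHom.id_apply, AlgHom.toRingHom_eq_coe,
    RingHom.coe_coe, Polynomial.coe_evalRingHom] at this
  rw [substLine, Polynomial.coeff_zero_eq_eval_zero]
  exact this

lemma QQ_natDegree {n : ℕ} {p : Polynomial (MvPolynomial (Fin n) ℝ)} {s : ℕ}
    (h : QQ p s) : p.natDegree ≤ s := by
  rw [Polynomial.natDegree_le_iff_coeff_eq_zero]
  intro N hN
  by_contra hne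
  have := h N hne
  omega

lemma QQ_coeff {n : ℕ} {p : Polynomial (MvPolynomial (Fin n) ℝ)} {s : ℕ}
    (h : QQ p s) (i : ℕ) : (p.coeff i).totalDegree ≤ s - i := by
  by_cases hz : p.coeff i = 0
  · simp [hz]
  · have := h i hz
    omega


section sylv

variable {n d : ℕ} (A B : ℕ → MvPolynomial (Fin n) ℝ)

/-- row weights -/
def rw' (d : ℕ) : Fin (d + d) → ℤ := fun i => if (i : ℕ) < d then -(i : ℕ) else (d : ℤ) - (i : ℕ)

lemma sylv_entry_bound (hA : ∀ k, A k ≠ 0 → ((A k).totalDegree : ℤ) + k ≤ d)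
    (hB : ∀ k, B k ≠ 0 → ((B k).totalDegree : ℤ) + k ≤ d) :
    ∀ i j, sylvGen d d A B i j ≠ 0 →
      ((sylvGen d d A B i j).totalDegree : ℤ) ≤ rw' d i + ((j : ℕ) : ℤ) := by
  intro i j hij
  simp only [sylvGen, Matrix.of_apply] at hij ⊢
  unfold rw'
  by_cases h1 : (i : ℕ) < d
  · rw [if_pos h1] at hij ⊢
    by_cases h2 : (i : ℕ) ≤ (j : ℕ) ∧ (j : ℕ) ≤ (i : ℕ) + d
    · rw [if_pos h2] at hij ⊢
      rw [if_pos h1]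
      have := hA _ hij
      omega
    · rw [if_neg h2] at hij; exact absurd rfl hij
  · rw [if_neg h1] at hij ⊢
    by_cases h2 : (j : ℕ) ≤ (i : ℕ) ∧ (i : ℕ) ≤ (j : ℕ) + d
    · rw [if_pos h2] at hij ⊢
      rw [if_neg h1]
      have := hB _ hij
      omega
    · rw [if_neg h2] at hij; exact absurd rfl hij

lemma sylv_det_deg (hd : 1 ≤ d)
    (hA : ∀ k, A k ≠ 0 → ((A k).totalDegree : ℤ) + k ≤ d)
    (hB : ∀ k, B k ≠ 0 → ((B k).totalDegree : ℤ) + k ≤ d) :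
    (sylvGen d d A B).det.totalDegree ≤ d ^ 2 := by
  apply det_totalDegree_le _ (rw' d) (fun j => ((j : ℕ) : ℤ))
    (sylv_entry_bound A B hA hB)
  rw [← Finset.sum_add_distrib]
  have h1 : ∀ i : Fin (d + d), rw' d i + ((i : ℕ) : ℤ)
      = if (i : ℕ) < d then 0 else (d : ℤ) := by
    intro i; unfold rw'; split <;> omega
  rw [Finset.sum_congr rfl (fun i _ => h1 i)]
  rw [Fin.sum_univ_eq_sum_range (fun k => if k < d then (0 : ℤ) else (d : ℤ))]
  rw [Finset.sum_range_add]
  have h2 : ∑ x ∈ Finset.range d, (if x < d then (0 : ℤ) else (d : ℤ)) = 0 :=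
    Finset.sum_eq_zero (fun x hx => by rw [if_pos (Finset.mem_range.mp hx)])
  have h3 : ∑ x ∈ Finset.range d, (if d + x < d then (0 : ℤ) else (d : ℤ))
      = d * d := by
    rw [Finset.sum_congr rfl (fun x _ => if_neg (by omega)), Finset.sum_const,
      Finset.card_range, nsmul_eq_mul]
  rw [h2, h3]
  push_cast
  ring_nf
  omega

lemma sylv_det_div (hd : 1 ≤ d) (f : MvPolynomial (Fin n) ℝ)
    (hA : ∀ k, A k ≠ 0 → ((A k).totalDegree : ℤ) + k ≤ d)
    (hB : ∀ k, B k ≠ 0 → ((B k).totalDegree : ℤ) + k ≤ d)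
    (hA0 : A 0 = f) (hB0 : B 0 = f) :
    ∃ g : MvPolynomial (Fin n) ℝ,
      (sylvGen d d A B).det = f * g ∧ g.totalDegree ≤ d ^ 2 - d := by
  set M := sylvGen d d A B with hM
  have hdd : d + d - 1 < d + d := by omega
  set j₀ : Fin (d + d) := ⟨d + d - 1, hdd⟩ with hj₀
  set v : Fin (d + d) → MvPolynomial (Fin n) ℝ :=
    fun i => if (i : ℕ) = d - 1 ∨ (i : ℕ) = d + d - 1 then 1 else 0 with hv
  have hcol : ∀ i, M i j₀ = f * v i := by
    intro i
    simp only [hM, sylvGen, Matrix.of_apply, hv, hj₀]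
    by_cases h1 : (i : ℕ) < d
    · rw [if_pos h1]
      by_cases h2 : (i : ℕ) = d - 1
      · rw [if_pos (by omega : (i : ℕ) ≤ d + d - 1 ∧ d + d - 1 ≤ (i : ℕ) + d),
          if_pos (Or.inl h2)]
        rw [(by omega : d - ((d + d - 1) - (i : ℕ)) = 0), hA0, mul_one]
      · rw [if_neg (by omega : ¬((i : ℕ) ≤ d + d - 1 ∧ d + d - 1 ≤ (i : ℕ) + d)),
          if_neg (by omega : ¬((i : ℕ) = d - 1 ∨ (i : ℕ) = d + d - 1)), mul_zero]
    · rw [if_neg h1]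
      have hi2 : (i : ℕ) < d + d := i.isLt
      by_cases h2 : (i : ℕ) = d + d - 1
      · rw [if_pos (by omega : (d + d - 1 : ℕ) ≤ (i : ℕ) ∧ (i : ℕ) ≤ (d + d - 1) + d),
          if_pos (Or.inr h2)]
        rw [(by omega : (i : ℕ) - (d + d - 1) = 0), hB0, mul_one]
      · rw [if_neg (by omega : ¬((d + d - 1 : ℕ) ≤ (i : ℕ) ∧ (i : ℕ) ≤ (d + d - 1) + d)),
          if_neg (by omega : ¬((i : ℕ) = d - 1 ∨ (i : ℕ) = d + d - 1)), mul_zero]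
  have hMeq : M = M.updateCol j₀ (f • v) := by
    ext i j
    rw [Matrix.updateCol_apply]
    by_cases h : j = j₀
    · rw [if_pos h, h, hcol i]; rfl
    · rw [if_neg h]
  refine ⟨(M.updateCol j₀ v).det, ?_, ?_⟩
  · conv_lhs => rw [hMeq]
    exact Matrix.det_updateCol_smul M j₀ f v
  · -- degree bound for the modified matrix
    set c' : Fin (d + d) → ℤ := fun j => if j = j₀ then (d : ℤ) - 1 else ((j : ℕ) : ℤ) with hc'
    apply det_totalDegree_le _ (rw' d) c'
    · intro i j hij
      rw [Matrix.updateCol_apply] at hij ⊢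
      by_cases h : j = j₀
      · rw [if_pos h] at hij ⊢
        simp only [hc', if_pos h]
        simp only [hv] at hij ⊢
        by_cases h2 : (i : ℕ) = d - 1 ∨ (i : ℕ) = d + d - 1
        · rw [if_pos h2]
          rw [totalDegree_one]
          unfold rw'
          split <;> omega
        · rw [if_neg h2] at hij; exact absurd rfl hij
      · rw [if_neg h] at hij ⊢
        simp only [hc', if_neg h]
        exact sylv_entry_bound A B hA hB i j hij
    · have h1 : ∀ i : Fin (d + d), rw' d i + c' i
          = if (i : ℕ) = d + d - 1 then 0 else if (i : ℕ) < d then 0 else (d : ℤ) := by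
        intro i
        simp only [hc']
        have : (i = j₀) ↔ ((i : ℕ) = d + d - 1) := by
          rw [Fin.ext_iff]
        unfold rw'
        by_cases h2 : (i : ℕ) = d + d - 1
        · rw [if_pos (this.mpr h2), if_pos h2]
          rw [if_neg (by omega : ¬((i : ℕ) < d))]
          omega
        · rw [if_neg (fun hh => h2 (this.mp hh)), if_neg h2]
          split <;> omega
      rw [← Finset.sum_add_distrib, Finset.sum_congr rfl (fun i _ => h1 i)]
      rw [Fin.sum_univ_eq_sum_range
        (fun k => if k = d + d - 1 then (0 : ℤ) else if k < d then 0 else (d : ℤ))]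
      rw [Finset.sum_range_add]
      have h2 : ∑ x ∈ Finset.range d,
          (if x = d + d - 1 then (0 : ℤ) else if x < d then 0 else (d : ℤ)) = 0 := by
        apply Finset.sum_eq_zero
        intro x hx
        have := Finset.mem_range.mp hx
        by_cases hxx : x = d + d - 1
        · rw [if_pos hxx]
        · rw [if_neg hxx, if_pos this]
      have h3 : ∑ x ∈ Finset.range d,
          (if d + x = d + d - 1 then (0 : ℤ) else if d + x < d then 0 else (d : ℤ))
          = d * d - d := by
        have hpt : ∀ x ∈ Finset.range d,
            (if d + x = d + d - 1 then (0 : ℤ) else if d + x < d then 0 else (d : ℤ))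
            = (d : ℤ) - (if x = d - 1 then (d : ℤ) else 0) := by
          intro x hx
          have := Finset.mem_range.mp hx
          by_cases hxx : x = d - 1
          · rw [if_pos (by omega), if_pos hxx]; ring
          · rw [if_neg (by omega), if_neg (by omega), if_neg hxx]; ring
        rw [Finset.sum_congr rfl hpt, Finset.sum_sub_distrib, Finset.sum_const,
          Finset.card_range, nsmul_eq_mul,
          Finset.sum_ite_eq' (Finset.range d) (d - 1) (fun _ => (d : ℤ)),
          if_pos (Finset.mem_range.mpr (by omega))]
      rw [h2, h3]
      have : ((d ^ 2 - d : ℕ) : ℤ) = (d : ℤ) * d - d := by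
        have : d ≤ d ^ 2 := by nlinarith
        push_cast [this]
        ring
      omega

end sylv

/-- (Vertex–vertex degree bound.) For `f` of total degree
`d ≥ 1` and `a, b ∈ ℝⁿ`, the polynomials `g₁ = f(u + λ·a)` and `g₂ = f(u + λ·b)`
have degree at most `d` in `λ` with `λ^i`-coefficients of total degree at most
`d - i`; the determinant `R` of their `2d × 2d` Sylvester matrix satisfies
`totalDegree R ≤ d²` and `R = f · g` for some `g` of total degree at most
`d² - d`. -/
theorem stmt_11 {n : ℕ} (d : ℕ) (hd : 1 ≤ d)
    (f : MvPolynomial (Fin n) ℝ) (hdeg : f.totalDegree = d)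
    (a b : Fin n → ℝ) :
    (substLine f a).natDegree ≤ d ∧
    (substLine f b).natDegree ≤ d ∧
    (∀ i, ((substLine f a).coeff i).totalDegree ≤ d - i) ∧
    (∀ i, ((substLine f b).coeff i).totalDegree ≤ d - i) ∧
    ((sylvGen d d (fun i => (substLine f a).coeff i)
        (fun i => (substLine f b).coeff i)).det).totalDegree ≤ d ^ 2 ∧
    ∃ g : MvPolynomial (Fin n) ℝ,
      (sylvGen d d (fun i => (substLine f a).coeff i)
        (fun i => (substLine f b).coeff i)).det = f * g ∧
      g.totalDegree ≤ d ^ 2 - d := by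
  have hQa : QQ (substLine f a) d := hdeg ▸ QQ_substLine f a
  have hQb : QQ (substLine f b) d := hdeg ▸ QQ_substLine f b
  refine ⟨QQ_natDegree hQa, QQ_natDegree hQb, fun i => QQ_coeff hQa i,
    fun i => QQ_coeff hQb i, ?_, ?_⟩
  · exact sylv_det_deg _ _ hd hQa hQb
  · exact sylv_det_div _ _ hd f hQa hQb (substLine_coeff_zero f a) (substLine_coeff_zero f b)
end
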